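/- arXiv:1807.04467 — 8 statements merged into one kernel-verified Lean document; each statement's English description precedes it below -/
import Mathlib

section
/- Let (aᵏ) and (bᵏ) be bounded sequences in Z = L²(Ω). If min{aᵏ, bᵏ} → 0 strongly in Z, then ⟨aᵏ, bᵏ⟩ → 0. -/
open MeasureTheory Filter

lemma inner_sub_inf_sub_inf_eq_zero
    {Ω : Type*} [MeasurableSpace Ω] (μ : Measure Ω)
    (f g : Lp ℝ 2 μ) : (inner ℝ (f - f ⊓ g) (g - f ⊓ g) : ℝ) = 0 := by
  rw [MeasureTheory.L2.inner_def]
  have h : (fun x => (inner ℝ ((f - f ⊓ g) x) ((g - f ⊓ g) x) : ℝ)) =ᵐ[μ] 0 := by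
    filter_upwards [MeasureTheory.Lp.coeFn_sub f (f ⊓ g),
      MeasureTheory.Lp.coeFn_sub g (f ⊓ g), MeasureTheory.Lp.coeFn_inf f g]
      with x h1 h2 h3
    simp only [h1, h2, Pi.sub_apply, h3, Pi.inf_apply, RCLike.inner_apply,
      starRingEnd_apply, star_trivial, Pi.zero_apply]
    rcases le_total (f x) (g x) with h | h
    · simp [min_eq_left h]
    · simp [min_eq_right h]
  rw [integral_congr_ae h]; simp

/-- **Lemma 2.1.** If `(aᵏ)`, `(bᵏ)` are bounded sequences in
`Z = L²(Ω)` and `min{aᵏ, bᵏ} → 0` strongly in `Z`, then `⟪aᵏ, bᵏ⟫ → 0`. -/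
theorem inner_tendsto_zero_of_min_tendsto_zero
    {Ω : Type*} [MeasurableSpace Ω] (μ : Measure Ω)
    (a b : ℕ → Lp ℝ 2 μ)
    (ha : ∃ C : ℝ, ∀ k, ‖a k‖ ≤ C)
    (hb : ∃ C : ℝ, ∀ k, ‖b k‖ ≤ C)
    (hmin : Tendsto (fun k => a k ⊓ b k) atTop (nhds 0)) :
    Tendsto (fun k => (inner ℝ (a k) (b k) : ℝ)) atTop (nhds 0) := by
  obtain ⟨Ca, hCa⟩ := ha
  obtain ⟨Cb, hCb⟩ := hb
  set m : ℕ → Lp ℝ 2 μ := fun k => a k ⊓ b k with hm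
  have hnorm : Tendsto (fun k => ‖m k‖) atTop (nhds 0) := by
    simpa using (tendsto_zero_iff_norm_tendsto_zero.mp hmin)
  have key : ∀ k, (inner ℝ (a k) (b k) : ℝ)
      = inner ℝ (a k) (m k) + inner ℝ (m k) (b k) - inner ℝ (m k) (m k) := by
    intro k
    have h0 := inner_sub_inf_sub_inf_eq_zero μ (a k) (b k)
    simp only [inner_sub_left, inner_sub_right] at h0
    have hc : (inner ℝ (m k) (a k) : ℝ) = inner ℝ (a k) (m k) := real_inner_comm _ _
    have hmk : a k ⊓ b k = m k := rfl
    rw [hmk] at h0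
    linarith [h0, hc]
  have bound : ∀ k, |(inner ℝ (a k) (b k) : ℝ)| ≤ (Ca + Cb + ‖m k‖) * ‖m k‖ := by
    intro k
    rw [key k]
    have h1 : |(inner ℝ (a k) (m k) : ℝ)| ≤ Ca * ‖m k‖ :=
      (abs_real_inner_le_norm _ _).trans (by
        gcongr; exact hCa k)
    have h2 : |(inner ℝ (m k) (b k) : ℝ)| ≤ Cb * ‖m k‖ := by
      refine (abs_real_inner_le_norm _ _).trans ?_
      rw [mul_comm]; gcongr
      exact hCb k
    have h3 : |(inner ℝ (m k) (m k) : ℝ)| ≤ ‖m k‖ * ‖m k‖ :=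
      abs_real_inner_le_norm _ _
    calc |(inner ℝ (a k) (m k) : ℝ) + inner ℝ (m k) (b k) - inner ℝ (m k) (m k)|
        ≤ |(inner ℝ (a k) (m k) : ℝ)| + |(inner ℝ (m k) (b k) : ℝ)|
          + |(inner ℝ (m k) (m k) : ℝ)| := by
          apply (abs_sub _ _).trans; gcongr; exact abs_add_le _ _
      _ ≤ Ca * ‖m k‖ + Cb * ‖m k‖ + ‖m k‖ * ‖m k‖ := by gcongr
      _ = (Ca + Cb + ‖m k‖) * ‖m k‖ := by ring
  have hb0 : Tendsto (fun k => (Ca + Cb + ‖m k‖) * ‖m k‖) atTop (nhds 0) := by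
    have hc : Tendsto (fun _ : ℕ => Ca + Cb) atTop (nhds (Ca + Cb)) := tendsto_const_nhds
    have h := (hc.add hnorm).mul hnorm
    simpa using h
  exact squeeze_zero_norm (fun k => by simpa using bound k) hb0
end

section
/- Let X, Z be real Hilbert (or Banach) spaces, f : X → ℝ, g : X → Z weakly sequentially lower semicontinuous in the sense that f and x ↦ ‖g₊(x)‖_Z are weakly lsc. Let ρₖ → ∞, let (wᵏ) be bounded in Z, and suppose (x^{k+1}) satisfies L_{ρₖ}(x^{k+1}, wᵏ) ≤ L_{ρₖ}(x, wᵏ) + εₖ for all x ∈ X with εₖ bounded, where L_ρ(x, w) = f(x) + (ρ/2)‖(g(x) + w/ρ)₊‖². If x̄ is a weak limit point of (x^{k+1}) along a subsequence on which f(x^{k+1}) is bounded below, then x̄ is a global minimizer of x ↦ ‖g₊(x)‖²_Z over X. -/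
open MeasureTheory Filter

lemma aux_pos_norm_le {Ω : Type*} [MeasurableSpace Ω] {μ : Measure Ω}
    (a b : Lp ℝ 2 μ) : ‖a ⊔ 0‖ ≤ ‖(a + b) ⊔ 0‖ + ‖b‖ := by
  calc ‖a ⊔ 0‖ ≤ ‖(a + b) ⊔ 0‖ + ‖a ⊔ 0 - (a + b) ⊔ 0‖ := norm_le_insert' _ _
    _ ≤ ‖(a + b) ⊔ 0‖ + ‖b‖ := by
        refine add_le_add le_rfl ?_
        calc ‖a ⊔ 0 - (a + b) ⊔ 0‖ ≤ ‖a - (a + b)‖ := norm_sup_sub_sup_le_norm _ _ _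
          _ = ‖b‖ := by rw [show a - (a + b) = -b by abel, norm_neg]

set_option maxHeartbeats 1000000 in
/-- **Theorem 4.2 (a), case `ρₖ → ∞`.** Let `f : X → ℝ` and
`x ↦ ‖g₊(x)‖` be weakly sequentially lsc, `ρₖ → ∞`, `(wᵏ)` bounded in
`Z = L²(Ω)`, and let `x^{k+1}` minimize the augmented Lagrangian
`L_ρ(x,w) = f(x) + (ρ/2)‖(g(x) + w/ρ)₊‖²` up to a bounded error `εₖ`.
Then every weak limit point `xbar` of `(x^{k+1})` along a subsequence on which
`f(x^{k+1})` is bounded below globally minimizes `x ↦ ‖g₊(x)‖²`. -/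
theorem weak_limit_minimizes_constraint_violation
    {X : Type*} [NormedAddCommGroup X] [NormedSpace ℝ X] [CompleteSpace X]
    {Ω : Type*} [MeasurableSpace Ω] (μ : Measure Ω)
    (f : X → ℝ) (g : X → Lp ℝ 2 μ)
    (hflsc : ∀ (x : X) (xk : ℕ → X),
      (∀ φ : X →L[ℝ] ℝ, Tendsto (fun k => φ (xk k)) atTop (nhds (φ x))) →
      f x ≤ atTop.liminf (fun k => f (xk k)))
    (hglsc : ∀ (x : X) (xk : ℕ → X),
      (∀ φ : X →L[ℝ] ℝ, Tendsto (fun k => φ (xk k)) atTop (nhds (φ x))) →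
      ‖(g x) ⊔ 0‖ ≤ atTop.liminf (fun k => ‖(g (xk k)) ⊔ 0‖))
    (ρ : ℕ → ℝ) (hρpos : ∀ k, 0 < ρ k) (hρ : Tendsto ρ atTop atTop)
    (w : ℕ → Lp ℝ 2 μ) (hw : ∃ C : ℝ, ∀ k, ‖w k‖ ≤ C)
    (ε : ℕ → ℝ) (hε : ∃ E : ℝ, ∀ k, ε k ≤ E)
    (xs : ℕ → X)
    (hmin : ∀ k : ℕ, ∀ x : X,
      f (xs (k + 1)) + (ρ k / 2) * ‖(g (xs (k + 1)) + (ρ k)⁻¹ • w k) ⊔ 0‖ ^ 2 ≤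
        f x + (ρ k / 2) * ‖(g x + (ρ k)⁻¹ • w k) ⊔ 0‖ ^ 2 + ε k)
    (xbar : X) (φs : ℕ → ℕ) (hφs : StrictMono φs)
    (hweak : ∀ φ : X →L[ℝ] ℝ,
      Tendsto (fun n => φ (xs (φs n + 1))) atTop (nhds (φ xbar)))
    (hfb : ∃ m : ℝ, ∀ n, m ≤ f (xs (φs n + 1))) :
    ∀ x : X, ‖(g xbar) ⊔ 0‖ ^ 2 ≤ ‖(g x) ⊔ 0‖ ^ 2 := by
  intro x
  obtain ⟨C, hC⟩ := hw
  obtain ⟨E, hE⟩ := hε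
  obtain ⟨m, hm⟩ := hfb
  set c : ℝ := ‖(g x) ⊔ 0‖ with hc
  set s : ℕ → ℝ := fun n => ‖(g (xs (φs n + 1))) ⊔ 0‖ with hs
  have hbar : ‖(g xbar) ⊔ 0‖ ≤ atTop.liminf s := hglsc xbar _ hweak
  -- ρ along the subsequence tends to atTop
  have hρφ : Tendsto (fun n => ρ (φs n)) atTop atTop :=
    hρ.comp hφs.tendsto_atTop
  have hρφpos : ∀ n, 0 < ρ (φs n) := fun n => hρpos _
  -- the error term
  set D : ℝ := max (f x - m + E) 0 with hD
  have hDnn : 0 ≤ D := le_max_right _ _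
  set u : ℕ → ℝ := fun n =>
    2 * ((ρ (φs n))⁻¹ * C) + Real.sqrt (2 * D / ρ (φs n)) with hu
  have hinv : Tendsto (fun n => (ρ (φs n))⁻¹) atTop (nhds 0) :=
    hρφ.inv_tendsto_atTop
  have hu0 : Tendsto u atTop (nhds 0) := by
    have h1 : Tendsto (fun n => 2 * ((ρ (φs n))⁻¹ * C)) atTop (nhds 0) := by
      have := (hinv.mul_const C).const_mul 2
      simpa using this
    have h2 : Tendsto (fun n => Real.sqrt (2 * D / ρ (φs n))) atTop (nhds 0) := by
      have h3 : Tendsto (fun n => 2 * D / ρ (φs n)) atTop (nhds 0) := by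
        have := hinv.const_mul (2 * D)
        simpa [div_eq_mul_inv] using this
      have := (Real.continuous_sqrt.tendsto 0).comp h3
      simpa [Function.comp_def] using this
    simpa using h1.add h2
  -- pointwise bound : s n ≤ c + u n
  have hkey : ∀ n, s n ≤ c + u n := by
    intro n
    have h1 := hmin (φs n) x
    simp only [hs, hu]
    set k := φs n with hk
    set ρk := ρ k with hρk
    have hρkpos : 0 < ρk := hρpos k
    set v : Lp ℝ 2 μ := (ρk)⁻¹ • w k with hv
    have hvnorm : ‖v‖ ≤ (ρk)⁻¹ * C := by
      rw [hv, norm_smul]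
      simp only [norm_inv, Real.norm_eq_abs, abs_of_pos hρkpos]
      exact mul_le_mul_of_nonneg_left (hC k) (by positivity)
    set A : ℝ := ‖(g (xs (k + 1)) + v) ⊔ 0‖ with hA
    set B : ℝ := ‖(g x + v) ⊔ 0‖ with hB
    have hAnn : 0 ≤ A := norm_nonneg _
    have hBnn : 0 ≤ B := norm_nonneg _
    have hA2 : A ^ 2 ≤ B ^ 2 + 2 * D / ρk := by
      have hfm : m ≤ f (xs (k + 1)) := hm n
      have hεE : ε k ≤ E := hE k
      have hDle : f x - f (xs (k + 1)) + ε k ≤ D := by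
        have h5 : f x - f (xs (k + 1)) + ε k ≤ f x - m + E := by linarith
        exact h5.trans (le_max_left _ _)
      have h2 : (ρk / 2) * A ^ 2 ≤ (ρk / 2) * B ^ 2 + D := by linarith [h1]
      have h3 : ρk * A ^ 2 ≤ ρk * B ^ 2 + 2 * D := by linarith
      have h4 : A ^ 2 - B ^ 2 ≤ 2 * D / ρk := by
        rw [le_div_iff₀ hρkpos]; nlinarith [h3]
      linarith
    have hsq : Real.sqrt (2 * D / ρk) ^ 2 = 2 * D / ρk :=
      Real.sq_sqrt (by positivity)
    have hsnn : 0 ≤ Real.sqrt (2 * D / ρk) := Real.sqrt_nonneg _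
    have hAB : A ≤ B + Real.sqrt (2 * D / ρk) := by
      nlinarith [hA2, hsq, hAnn, hBnn, hsnn]
    have hsA : ‖(g (xs (k + 1))) ⊔ 0‖ ≤ A + ‖v‖ := aux_pos_norm_le (g (xs (k + 1))) v
    have hBc : B ≤ c + ‖v‖ := by
      have h6 := aux_pos_norm_le (g x + v) (-v)
      simpa [hc, hB] using h6
    linarith
  -- conclude : liminf s ≤ c
  have hlim : atTop.liminf s ≤ c := by
    have h1 : atTop.liminf s ≤ atTop.liminf (fun n => c + u n) := by
      refine liminf_le_liminf (Eventually.of_forall hkey) ?_ ?_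
      · exact isBoundedUnder_of ⟨0, fun n => norm_nonneg _⟩
      · have htend : Tendsto (fun n => c + u n) atTop (nhds (c + 0)) :=
          tendsto_const_nhds.add hu0
        exact htend.isBoundedUnder_le.isCoboundedUnder_ge
    have h2 : atTop.liminf (fun n => c + u n) = c := by
      have : Tendsto (fun n => c + u n) atTop (nhds c) := by
        simpa using tendsto_const_nhds.add hu0
      exact this.liminf_eq
    linarith
  have hfinal : ‖(g xbar) ⊔ 0‖ ≤ c := hbar.trans hlim
  have := pow_le_pow_left₀ (norm_nonneg _) hfinal 2
  simpa [hc] using this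
end

section
/- In the setting of the augmented Lagrangian method: let ρₖ → ∞, (wᵏ) bounded in Z, εₖ → 0, and suppose L_{ρₖ}(x^{k+1}, wᵏ) ≤ L_{ρₖ}(x, wᵏ) + εₖ for all x ∈ X, where L_ρ(x,w) = f(x) + (ρ/2)‖(g(x)+w/ρ)₊‖²_Z. If x is feasible (g(x) ≤ 0, i.e. g(x)₊ = 0 a.e.) and f is weakly sequentially lsc, then every weak limit point x̄ of (x^{k+1}) satisfies f(x̄) ≤ f(x). -/
open MeasureTheory Filter

/-- **Theorem 4.2 (b), case `ρₖ → ∞`.** In the augmented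
Lagrangian method with `ρₖ → ∞`, `(wᵏ)` bounded, `εₖ → 0`, and
`L_{ρₖ}(x^{k+1}, wᵏ) ≤ L_{ρₖ}(x, wᵏ) + εₖ` for all `x`: if `x` is feasible
(`g(x)₊ = 0`) and `f` is weakly sequentially lsc, then every weak limit point
`xbar` of `(x^{k+1})` satisfies `f(xbar) ≤ f(x)`. -/
theorem weak_limit_optimal_on_feasible
    {X : Type*} [NormedAddCommGroup X] [NormedSpace ℝ X] [CompleteSpace X]
    {Ω : Type*} [MeasurableSpace Ω] (μ : Measure Ω)
    (f : X → ℝ) (g : X → Lp ℝ 2 μ)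
    (hflsc : ∀ (x : X) (xk : ℕ → X),
      (∀ φ : X →L[ℝ] ℝ, Tendsto (fun k => φ (xk k)) atTop (nhds (φ x))) →
      f x ≤ atTop.liminf (fun k => f (xk k)))
    (ρ : ℕ → ℝ) (hρpos : ∀ k, 0 < ρ k) (hρ : Tendsto ρ atTop atTop)
    (w : ℕ → Lp ℝ 2 μ) (hw : ∃ C : ℝ, ∀ k, ‖w k‖ ≤ C)
    (ε : ℕ → ℝ) (hε : Tendsto ε atTop (nhds 0))
    (xs : ℕ → X)
    (hmin : ∀ k : ℕ, ∀ x : X,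
      f (xs (k + 1)) + (ρ k / 2) * ‖(g (xs (k + 1)) + (ρ k)⁻¹ • w k) ⊔ 0‖ ^ 2 ≤
        f x + (ρ k / 2) * ‖(g x + (ρ k)⁻¹ • w k) ⊔ 0‖ ^ 2 + ε k)
    (x : X) (hfeas : (g x) ⊔ 0 = 0)
    (xbar : X) (φs : ℕ → ℕ) (hφs : StrictMono φs)
    (hweak : ∀ φ : X →L[ℝ] ℝ,
      Tendsto (fun n => φ (xs (φs n + 1))) atTop (nhds (φ xbar))) :
    f xbar ≤ f x := by
  obtain ⟨C, hC⟩ := hw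
  have hC0 : 0 ≤ C := (norm_nonneg (w 0)).trans (hC 0)
  have hgx : g x ≤ 0 := sup_eq_right.mp hfeas
  -- bound on (ρ k)⁻¹
  have hinv : Tendsto (fun k => (ρ k)⁻¹) atTop (nhds 0) := hρ.inv_tendsto_atTop
  obtain ⟨M, hM⟩ : ∃ M : ℝ, ∀ k, (ρ k)⁻¹ ≤ M := by
    obtain ⟨M, hM⟩ := hinv.bddAbove_range
    exact ⟨M, fun k => hM ⟨k, rfl⟩⟩
  have hM0 : 0 < M := lt_of_lt_of_le (inv_pos.mpr (hρpos 0)) (hM 0)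
  -- bound on |ε k|
  obtain ⟨E, hE⟩ : ∃ E : ℝ, ∀ k, |ε k| ≤ E := by
    have habs : Tendsto (fun k => |ε k|) atTop (nhds 0) := by
      simpa using hε.abs
    obtain ⟨E, hE⟩ := habs.bddAbove_range
    exact ⟨E, fun k => hE ⟨k, rfl⟩⟩
  -- norm of c k := (ρ k)⁻¹ • w k
  have hck : ∀ k, ‖(ρ k)⁻¹ • w k‖ ≤ C * (ρ k)⁻¹ := by
    intro k
    rw [norm_smul, Real.norm_eq_abs, abs_of_nonneg (inv_nonneg.mpr (hρpos k).le)]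
    rw [mul_comm]
    exact mul_le_mul_of_nonneg_right (hC k) (inv_nonneg.mpr (hρpos k).le)
  have hckM : ∀ k, ‖(ρ k)⁻¹ • w k‖ ≤ C * M := fun k =>
    (hck k).trans (mul_le_mul_of_nonneg_left (hM k) hC0)
  -- penalty at x
  have hpenx : ∀ k, ‖(g x + (ρ k)⁻¹ • w k) ⊔ 0‖ ≤ ‖(ρ k)⁻¹ • w k‖ := by
    intro k
    refine HasSolidNorm.solid ?_
    rw [abs_of_nonneg (le_sup_right : (0 : Lp ℝ 2 μ) ≤ _)]
    have hle : g x + (ρ k)⁻¹ • w k ≤ (ρ k)⁻¹ • w k := by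
      calc g x + (ρ k)⁻¹ • w k ≤ 0 + (ρ k)⁻¹ • w k := add_le_add hgx le_rfl
        _ = (ρ k)⁻¹ • w k := zero_add _
    have h0 : (g x + (ρ k)⁻¹ • w k) ⊔ 0 ≤ ((ρ k)⁻¹ • w k) ⊔ 0 := sup_le_sup_right hle 0
    have h1 : ((ρ k)⁻¹ • w k) ⊔ 0 ≤ |(ρ k)⁻¹ • w k| := sup_le (le_abs_self ((ρ k)⁻¹ • w k)) (abs_nonneg ((ρ k)⁻¹ • w k))
    exact h0.trans h1
  -- key inequality from hmin k x
  have hstar : ∀ k, f (xs (k + 1)) + ρ k / 2 * ‖(g (xs (k + 1)) + (ρ k)⁻¹ • w k) ⊔ 0‖ ^ 2 ≤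
      f x + C ^ 2 / 2 * (ρ k)⁻¹ + ε k := by
    intro k
    refine (hmin k x).trans ?_
    have h1 : ‖(g x + (ρ k)⁻¹ • w k) ⊔ 0‖ ≤ C * (ρ k)⁻¹ := (hpenx k).trans (hck k)
    have hnn : (0:ℝ) ≤ ‖(g x + (ρ k)⁻¹ • w k) ⊔ 0‖ := norm_nonneg _
    have h2 : ‖(g x + (ρ k)⁻¹ • w k) ⊔ 0‖ ^ 2 ≤ (C * (ρ k)⁻¹) ^ 2 := by
      exact pow_le_pow_left₀ hnn h1 2
    have hρk := hρpos k
    have hρkne : ρ k ≠ 0 := hρk.ne'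
    have h3 : ρ k / 2 * ‖(g x + (ρ k)⁻¹ • w k) ⊔ 0‖ ^ 2 ≤ ρ k / 2 * (C * (ρ k)⁻¹) ^ 2 :=
      mul_le_mul_of_nonneg_left h2 (by positivity)
    have h4 : ρ k / 2 * (C * (ρ k)⁻¹) ^ 2 = C ^ 2 / 2 * (ρ k)⁻¹ := by
      field_simp
    linarith
  have hupper : ∀ k, f (xs (k + 1)) ≤ f x + C ^ 2 / 2 * (ρ k)⁻¹ + ε k := by
    intro k
    have h := hstar k
    have hnn : (0:ℝ) ≤ ρ k / 2 * ‖(g (xs (k + 1)) + (ρ k)⁻¹ • w k) ⊔ 0‖ ^ 2 :=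
      mul_nonneg (div_nonneg (hρpos k).le (by norm_num)) (sq_nonneg _)
    linarith
  -- bound on |T k| where T k = f x + C^2/2 * (ρ k)⁻¹ + ε k
  set Tb : ℝ := |f x| + C ^ 2 / 2 * M + E with hTb
  have hT : ∀ k, |f x + C ^ 2 / 2 * (ρ k)⁻¹ + ε k| ≤ Tb := by
    intro k
    have h1 : |C ^ 2 / 2 * (ρ k)⁻¹| ≤ C ^ 2 / 2 * M := by
      rw [abs_of_nonneg (mul_nonneg (by positivity) (inv_nonneg.mpr (hρpos k).le))]
      exact mul_le_mul_of_nonneg_left (hM k) (by positivity)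
    calc |f x + C ^ 2 / 2 * (ρ k)⁻¹ + ε k|
        ≤ |f x + C ^ 2 / 2 * (ρ k)⁻¹| + |ε k| := abs_add_le _ _
      _ ≤ (|f x| + |C ^ 2 / 2 * (ρ k)⁻¹|) + |ε k| := by gcongr; exact abs_add_le _ _
      _ ≤ Tb := by rw [hTb]; linarith [hE k]
  -- lower bound, eventually
  set L : ℝ := 2 * (f (xs 1) - ε 0 - 4 * ρ 0 * C ^ 2 * M ^ 2 - Tb / 2) with hL
  have hlow : ∀ᶠ k in atTop, L ≤ f (xs (k + 1)) := by
    clear_value Tb L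
    filter_upwards [hρ.eventually_ge_atTop (4 * ρ 0)] with k h4
    set N : ℝ := ‖(g (xs (k + 1)) + (ρ k)⁻¹ • w k) ⊔ 0‖ with hNdef
    set Tk : ℝ := f x + C ^ 2 / 2 * (ρ k)⁻¹ + ε k with hTk
    clear_value N Tk
    have hNnn : 0 ≤ N := by rw [hNdef]; exact norm_nonneg _
    have hNsq : ρ k * N ^ 2 ≤ 2 * (Tk - f (xs (k + 1))) := by
      have h := hstar k
      rw [hNdef, hTk]
      linarith
    -- comparison at step 0
    have hmin0 := hmin 0 (xs (k + 1))
    have hp0 : (0:ℝ) ≤ ρ 0 / 2 * ‖(g (xs (0 + 1)) + (ρ 0)⁻¹ • w 0) ⊔ 0‖ ^ 2 :=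
      mul_nonneg (div_nonneg (hρpos 0).le (by norm_num)) (sq_nonneg _)
    -- N0k ≤ N + 2CM
    have hN0 : ‖(g (xs (k + 1)) + (ρ 0)⁻¹ • w 0) ⊔ 0‖ ≤ N + 2 * (C * M) := by
      rw [hNdef]
      have htri : ‖(g (xs (k + 1)) + (ρ 0)⁻¹ • w 0) ⊔ 0‖ ≤
          ‖(g (xs (k + 1)) + (ρ k)⁻¹ • w k) ⊔ 0‖ +
          ‖(g (xs (k + 1)) + (ρ 0)⁻¹ • w 0) ⊔ 0 - (g (xs (k + 1)) + (ρ k)⁻¹ • w k) ⊔ 0‖ := by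
        exact norm_le_insert' _ _
      have hlip : ‖(g (xs (k + 1)) + (ρ 0)⁻¹ • w 0) ⊔ 0 - (g (xs (k + 1)) + (ρ k)⁻¹ • w k) ⊔ 0‖ ≤
          ‖(g (xs (k + 1)) + (ρ 0)⁻¹ • w 0) - (g (xs (k + 1)) + (ρ k)⁻¹ • w k)‖ :=
        norm_sup_sub_sup_le_norm _ _ _
      have hdiff : ‖(g (xs (k + 1)) + (ρ 0)⁻¹ • w 0) - (g (xs (k + 1)) + (ρ k)⁻¹ • w k)‖ ≤
          2 * (C * M) := by
        have : (g (xs (k + 1)) + (ρ 0)⁻¹ • w 0) - (g (xs (k + 1)) + (ρ k)⁻¹ • w k) =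
            (ρ 0)⁻¹ • w 0 - (ρ k)⁻¹ • w k := by abel
        rw [this]
        calc ‖(ρ 0)⁻¹ • w 0 - (ρ k)⁻¹ • w k‖ ≤ ‖(ρ 0)⁻¹ • w 0‖ + ‖(ρ k)⁻¹ • w k‖ :=
              norm_sub_le _ _
          _ ≤ 2 * (C * M) := by linarith [hckM 0, hckM k]
      linarith
    have hN0nn : (0:ℝ) ≤ ‖(g (xs (k + 1)) + (ρ 0)⁻¹ • w 0) ⊔ 0‖ := norm_nonneg _
    have hN0sq : ‖(g (xs (k + 1)) + (ρ 0)⁻¹ • w 0) ⊔ 0‖ ^ 2 ≤ 2 * N ^ 2 + 8 * (C * M) ^ 2 := by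
      have hsq := pow_le_pow_left₀ hN0nn hN0 2
      have hexp : (N + 2 * (C * M)) ^ 2 = N ^ 2 + 4 * (C * M) * N + 4 * (C * M) ^ 2 := by ring
      have h8 : (N - 2 * (C * M)) ^ 2 = N ^ 2 - 4 * (C * M) * N + 4 * (C * M) ^ 2 := by ring
      have h8nn : 0 ≤ (N - 2 * (C * M)) ^ 2 := sq_nonneg _
      linarith
    -- from hmin0: f (xs (k+1)) ≥ f (xs 1) - ε 0 - (ρ 0/2) N0k²
    have hlb1 : f (xs 1) - ε 0 - ρ 0 / 2 * ‖(g (xs (k + 1)) + (ρ 0)⁻¹ • w 0) ⊔ 0‖ ^ 2 ≤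
        f (xs (k + 1)) := by
      have h01 : (0:ℕ) + 1 = 1 := rfl
      rw [h01] at hmin0 hp0
      linarith
    -- ρ0 * N² ≤ (Tk - u)/2  using ρ k ≥ 4 ρ0
    have hρ0 := hρpos 0
    have hkey : 2 * (ρ 0 * N ^ 2) ≤ Tk - f (xs (k + 1)) := by
      have h5 : ρ 0 * (ρ k * N ^ 2) ≤ ρ 0 * (2 * (Tk - f (xs (k + 1)))) :=
        mul_le_mul_of_nonneg_left hNsq hρ0.le
      have h6 : (4 * ρ 0) * (ρ 0 * N ^ 2) ≤ ρ k * (ρ 0 * N ^ 2) :=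
        mul_le_mul_of_nonneg_right h4 (mul_nonneg hρ0.le (sq_nonneg N))
      have h7 : (2 * ρ 0) * (2 * (ρ 0 * N ^ 2)) ≤ (2 * ρ 0) * (Tk - f (xs (k + 1))) := by
        linarith
      exact le_of_mul_le_mul_left h7 (by positivity)
    have hTkb : |Tk| ≤ Tb := by rw [hTk]; exact hT k
    have habs := abs_le.mp hTkb
    -- combine
    have h9 : ρ 0 / 2 * ‖(g (xs (k + 1)) + (ρ 0)⁻¹ • w 0) ⊔ 0‖ ^ 2 ≤
        ρ 0 / 2 * (2 * N ^ 2 + 8 * (C * M) ^ 2) :=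
      mul_le_mul_of_nonneg_left hN0sq (div_nonneg hρ0.le (by norm_num))
    have h10 : ρ 0 / 2 * (2 * N ^ 2 + 8 * (C * M) ^ 2) = ρ 0 * N ^ 2 + 4 * ρ 0 * C ^ 2 * M ^ 2 := by
      ring
    have hfin1 : f (xs 1) - ε 0 - (ρ 0 * N ^ 2 + 4 * ρ 0 * C ^ 2 * M ^ 2) ≤ f (xs (k + 1)) := by
      linarith [hlb1, h9, h10]
    have hfin2 : 2 * (ρ 0 * N ^ 2) ≤ Tb - f (xs (k + 1)) := by
      linarith [hkey, habs.2]
    rw [hL]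
    linarith [hfin1, hfin2]
  -- assemble
  have hsub : Tendsto φs atTop atTop := hφs.tendsto_atTop
  have hTsub : Tendsto (fun n => f x + C ^ 2 / 2 * (ρ (φs n))⁻¹ + ε (φs n)) atTop
      (nhds (f x)) := by
    have h1 : Tendsto (fun n => (ρ (φs n))⁻¹) atTop (nhds 0) := hinv.comp hsub
    have h2 : Tendsto (fun n => ε (φs n)) atTop (nhds 0) := hε.comp hsub
    have h3 := ((tendsto_const_nhds : Tendsto (fun _ : ℕ => f x) atTop (nhds (f x))).add
      (h1.const_mul (C ^ 2 / 2))).add h2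
    simpa only [mul_zero, add_zero] using h3
  have hmain : f xbar ≤ atTop.liminf (fun n => f (xs (φs n + 1))) :=
    hflsc xbar (fun n => xs (φs n + 1)) hweak
  have hboundu : IsBoundedUnder (· ≥ ·) atTop (fun n => f (xs (φs n + 1))) := by
    refine ⟨L, ?_⟩
    have := hsub.eventually hlow
    exact eventually_map.mpr (this.mono fun n hn => hn)
  have hcobT : IsCoboundedUnder (· ≥ ·) atTop
      (fun n => f x + C ^ 2 / 2 * (ρ (φs n))⁻¹ + ε (φs n)) :=
    hTsub.isBoundedUnder_le.isCoboundedUnder_ge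
  have h2 : atTop.liminf (fun n => f (xs (φs n + 1))) ≤
      atTop.liminf (fun n => f x + C ^ 2 / 2 * (ρ (φs n))⁻¹ + ε (φs n)) :=
    liminf_le_liminf (Eventually.of_forall fun n => hupper (φs n)) hboundu hcobT
  have h3 : atTop.liminf (fun n => f x + C ^ 2 / 2 * (ρ (φs n))⁻¹ + ε (φs n)) = f x :=
    hTsub.liminf_eq
  linarith
end

section
/- Let Z be a Hilbert space, K ⊆ Z a nonempty closed convex cone, and P_K the metric projection onto K. Then the function φ(z) = ‖P_K(z)‖² is Fréchet differentiable on Z with φ'(z) = 2 P_K(z). -/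
open RealInnerProductSpace

/-- Let `Z` be a real Hilbert space, `K ⊆ Z` a nonempty
closed convex cone and `P` the metric projection onto `K`. Then
`φ(z) = ‖P z‖²` is Fréchet differentiable with `φ'(z) = 2 P z`
(identified with the functional `v ↦ 2⟪P z, v⟫`). -/
theorem sq_norm_proj_cone_hasFDerivAt
    {Z : Type*} [NormedAddCommGroup Z] [InnerProductSpace ℝ Z] [CompleteSpace Z]
    (K : Set Z) (hKne : K.Nonempty) (hKcl : IsClosed K) (hKco : Convex ℝ K)
    (hKcone : ∀ c : ℝ, 0 ≤ c → ∀ z ∈ K, c • z ∈ K)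
    (P : Z → Z)
    (hP : ∀ z : Z, P z ∈ K ∧ ∀ y ∈ K, ‖z - P z‖ ≤ ‖z - y‖)
    (z : Z) :
    HasFDerivAt (fun u => ‖P u‖ ^ 2) ((2 : ℝ) • (innerSL ℝ (P z))) z := by
  have hPmem : ∀ u, P u ∈ K := fun u => (hP u).1
  -- variational inequality
  have hVI : ∀ u : Z, ∀ y ∈ K, ⟪u - P u, y - P u⟫ ≤ 0 := by
    intro u y hy
    haveI : Nonempty K := ⟨⟨P u, hPmem u⟩⟩
    have hinf : ‖u - P u‖ = ⨅ w : K, ‖u - w‖ := by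
      refine le_antisymm (le_ciInf fun w => (hP u).2 w w.2) ?_
      have hbd : BddBelow (Set.range fun w : K => ‖u - w‖) := by
        refine ⟨0, ?_⟩
        rintro b ⟨w, rfl⟩
        exact norm_nonneg _
      exact ciInf_le hbd ⟨P u, hPmem u⟩
    exact ((norm_eq_iInf_iff_real_inner_le_zero hKco (hPmem u)).1 hinf) y hy
  have hzero : (0 : Z) ∈ K := by
    obtain ⟨w, hw⟩ := hKne
    simpa using hKcone 0 le_rfl w hw
  -- orthogonality for cones
  have horth : ∀ u : Z, ⟪u - P u, P u⟫ = 0 := by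
    intro u
    have h1 := hVI u 0 hzero
    have h2 := hVI u ((2 : ℝ) • P u) (hKcone 2 (by norm_num) _ (hPmem u))
    have e1 : ⟪u - P u, (0 : Z) - P u⟫ = -⟪u - P u, P u⟫ := by
      simp [inner_neg_right]
    have e2 : (2 : ℝ) • P u - P u = P u := by
      rw [two_smul]; abel
    rw [e1] at h1
    rw [e2] at h2
    linarith
  -- P is 1-Lipschitz
  have hLip : ∀ u v : Z, ‖P u - P v‖ ≤ ‖u - v‖ := by
    intro u v
    have h1 := hVI u (P v) (hPmem v)
    have h2 := hVI v (P u) (hPmem u)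
    have e1 : ⟪u - P u, P v - P u⟫ = -⟪u - P u, P u - P v⟫ := by
      rw [← inner_neg_right]; congr 1; abel
    rw [e1] at h1
    have key : ‖P u - P v‖ ^ 2 ≤ ⟪u - v, P u - P v⟫ := by
      have expand : ⟪u - v, P u - P v⟫ - ‖P u - P v‖ ^ 2
          = ⟪u - P u, P u - P v⟫ - ⟪v - P v, P u - P v⟫ := by
        rw [← real_inner_self_eq_norm_sq]
        rw [← inner_sub_left, ← inner_sub_left]
        congr 1
        abel
      linarith
    have cs := real_inner_le_norm (u - v) (P u - P v)
    rcases eq_or_lt_of_le (norm_nonneg (P u - P v)) with h | h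
    · rw [← h]; exact norm_nonneg _
    · have : ‖P u - P v‖ * ‖P u - P v‖ ≤ ‖u - v‖ * ‖P u - P v‖ := by
        nlinarith
      exact le_of_mul_le_mul_right this h
  -- decomposition φ u = ‖u‖² - ‖u - P u‖²
  have hphi : ∀ u : Z, ‖P u‖ ^ 2 = ‖u‖ ^ 2 - ‖u - P u‖ ^ 2 := by
    intro u
    have : ‖u‖ ^ 2 = ‖(u - P u) + P u‖ ^ 2 := by rw [sub_add_cancel]
    rw [this, norm_add_sq_real, horth u]
    ring
  -- main error bound
  have key : ∀ h : Z,
      |‖P (z + h)‖ ^ 2 - ‖P z‖ ^ 2 - 2 * ⟪P z, h⟫| ≤ 2 * ‖h‖ ^ 2 := by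
    intro h
    set f : Z → ℝ := fun u => ‖u - P u‖ ^ 2 with hf
    -- upper bound on f (z+h)
    have hub : f (z + h) ≤ f z + 2 * ⟪z - P z, h⟫ + ‖h‖ ^ 2 := by
      have h1 : ‖(z + h) - P (z + h)‖ ≤ ‖(z + h) - P z‖ := (hP (z + h)).2 _ (hPmem z)
      have h2 : ‖(z + h) - P z‖ ^ 2 = f z + 2 * ⟪z - P z, h⟫ + ‖h‖ ^ 2 := by
        have e : (z + h) - P z = (z - P z) + h := by abel
        rw [e, norm_add_sq_real]
      calc f (z + h) ≤ ‖(z + h) - P z‖ ^ 2 :=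
            pow_le_pow_left₀ (norm_nonneg _) h1 2
        _ = _ := h2
    -- lower bound on f (z+h)
    have hlb : f z + 2 * ⟪z - P z, h⟫ + ‖h‖ ^ 2 ≤ f (z + h) + 2 * ⟪P (z + h) - P z, h⟫ := by
      have h1 : ‖z - P z‖ ≤ ‖z - P (z + h)‖ := (hP z).2 _ (hPmem (z + h))
      have h2 : ‖z - P (z + h)‖ ^ 2
          = f (z + h) - 2 * ⟪(z + h) - P (z + h), h⟫ + ‖h‖ ^ 2 := by
        have e : z - P (z + h) = ((z + h) - P (z + h)) - h := by abel
        rw [e, norm_sub_sq_real]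
      have h3 : f z ≤ f (z + h) - 2 * ⟪(z + h) - P (z + h), h⟫ + ‖h‖ ^ 2 := by
        rw [← h2]; exact pow_le_pow_left₀ (norm_nonneg _) h1 2
      have h4 : ⟪(z + h) - P (z + h), h⟫
          = ⟪z - P z, h⟫ + ⟪h, h⟫ - ⟪P (z + h) - P z, h⟫ := by
        rw [← inner_add_left, ← inner_sub_left]
        congr 1
        abel
      have h5 : ⟪h, h⟫ = ‖h‖ ^ 2 := real_inner_self_eq_norm_sq h
      rw [h4, h5] at h3
      linarith
    -- bound cross term
    have hcross : |⟪P (z + h) - P z, h⟫| ≤ ‖h‖ ^ 2 := by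
      have := abs_real_inner_le_norm (P (z + h) - P z) h
      have hl : ‖P (z + h) - P z‖ ≤ ‖h‖ := by
        have := hLip (z + h) z
        simpa using this
      calc |⟪P (z + h) - P z, h⟫| ≤ ‖P (z + h) - P z‖ * ‖h‖ := this
        _ ≤ ‖h‖ * ‖h‖ := mul_le_mul_of_nonneg_right hl (norm_nonneg _)
        _ = ‖h‖ ^ 2 := (sq ‖h‖).symm
    -- expand φ
    have hnorm : ‖z + h‖ ^ 2 = ‖z‖ ^ 2 + 2 * ⟪z, h⟫ + ‖h‖ ^ 2 := norm_add_sq_real z h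
    have hinner : ⟪z, h⟫ - ⟪z - P z, h⟫ = ⟪P z, h⟫ := by
      rw [← inner_sub_left]; congr 1; abel
    rw [hphi (z + h), hphi z, hnorm]
    rw [abs_le]
    rw [abs_le] at hcross
    have hfz : f z = ‖z - P z‖ ^ 2 := rfl
    have hfzh : f (z + h) = ‖z + h - P (z + h)‖ ^ 2 := rfl
    rw [hfz, hfzh] at hub hlb
    constructor <;>
      linarith [hub, hlb, hcross.1, hcross.2, hinner, sq_nonneg ‖h‖]
  -- conclude
  rw [hasFDerivAt_iff_isLittleO_nhds_zero]
  rw [Asymptotics.isLittleO_iff]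
  intro c hc
  have hc2 : 0 < c / 2 := half_pos hc
  filter_upwards [Metric.ball_mem_nhds (0 : Z) hc2] with h hh
  have hh' : ‖h‖ < c / 2 := by simpa [dist_eq_norm] using hh
  have happ : ((2 : ℝ) • innerSL ℝ (P z)) h = 2 * ⟪P z, h⟫ := by
    simp [real_inner_comm]
  rw [Real.norm_eq_abs, happ]
  calc |‖P (z + h)‖ ^ 2 - ‖P z‖ ^ 2 - 2 * ⟪P z, h⟫| ≤ 2 * ‖h‖ ^ 2 := key h
    _ = (2 * ‖h‖) * ‖h‖ := by ring
    _ ≤ c * ‖h‖ := by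
        apply mul_le_mul_of_nonneg_right _ (norm_nonneg h)
        linarith
end

section
/- Let X be a reflexive Banach space whose squared norm q(x) = ‖x‖² is continuously differentiable, f : X → ℝ and x ↦ ‖g₊(x)‖_Z weakly sequentially lsc with f, g continuously Fréchet differentiable (g : X → Z = L²(Ω)). Let x̄ be a local minimizer of f over {x : g(x)₊ = 0}, minimizing over the closed ball B_r(x̄). For each k ∈ ℕ, let xᵏ minimize x ↦ f(x) + k‖g₊(x)‖²_Z + ‖x − x̄‖²_X over B_r(x̄). Then some subsequence of (xᵏ) converges strongly to x̄. -/
open MeasureTheory Filter Metric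

open Filter Topology NormedSpace TopologicalSpace

section AuxSep
variable {W : Type*} [NormedAddCommGroup W] [NormedSpace ℝ W]

/-- Separation of a point from a closed submodule by a functional vanishing on it. -/
lemma aux_sep (p : Submodule ℝ W) (hp : IsClosed (p : Set W)) {w : W} (hw : w ∉ p) :
    ∃ F : W →L[ℝ] ℝ, (∀ z ∈ p, F z = 0) ∧ F w ≠ 0 := by

  obtain ⟨f, u, hfu, huw⟩ := geometric_hahn_banach_closed_point p.convex hp hw
  have hker : ∀ z ∈ p, f z = 0 := by
    intro z hz
    by_contra h
    have h1 : ((u / f z) : ℝ) • z ∈ p := p.smul_mem _ hz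
    have := hfu _ h1
    rw [_root_.map_smul] at this
    simp only [smul_eq_mul] at this
    rw [div_mul_cancel₀ _ h] at this
    exact lt_irrefl _ this
  have h0 : (0:ℝ) < u := by simpa using hfu 0 p.zero_mem
  exact ⟨f, hker, ne_of_gt (h0.trans huw)⟩

/-- A closed subspace of a reflexive space is reflexive. -/
lemma aux_subspace_reflexive
    (hrefl : Function.Surjective (inclusionInDoubleDual ℝ W))
    (Y : Submodule ℝ W) (hY : IsClosed (Y : Set W)) :
    Function.Surjective (inclusionInDoubleDual ℝ Y) := by
  intro F
  -- restriction map X* → Y*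
  let ρ : StrongDual ℝ W →L[ℝ] StrongDual ℝ Y := (ContinuousLinearMap.compL ℝ Y W ℝ).flip Y.subtypeL
  have hρ : ∀ (φ : StrongDual ℝ W) (y : Y), ρ φ y = φ y := fun _ _ => rfl
  obtain ⟨x, hx⟩ := hrefl (F.comp ρ)
  have hxapp : ∀ φ : StrongDual ℝ W, φ x = F (ρ φ) := by
    intro φ
    have := congrArg (fun T => T φ) hx
    simpa using this
  have hxY : x ∈ Y := by
    by_contra hxY
    obtain ⟨φ, hφ0, hφx⟩ := aux_sep Y hY hxY
    have : ρ φ = 0 := by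
      ext y; exact hφ0 y y.2
    have h2 := hxapp φ
    rw [this] at h2
    simp at h2
    exact hφx h2
  refine ⟨⟨x, hxY⟩, ?_⟩
  ext ψ
  obtain ⟨φ, hext, -⟩ := exists_extension_norm_eq Y ψ
  have hρφ : ρ φ = ψ := by ext y; exact hext y
  have : (inclusionInDoubleDual ℝ Y ⟨x, hxY⟩) ψ = ψ ⟨x, hxY⟩ := rfl
  rw [this, ← hρφ]
  have : ρ φ ⟨x, hxY⟩ = φ x := rfl
  rw [this, hxapp φ]

/-- If the dual of a normed space is separable, so is the space. -/
lemma aux_sep_of_dual_sep [SeparableSpace (StrongDual ℝ W)] : SeparableSpace W := by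
  obtain ⟨S, hScount, hSdense⟩ := exists_countable_dense (StrongDual ℝ W)
  -- for each functional pick a near-norming vector
  have hpick : ∀ F : StrongDual ℝ W, ∃ w : W, ‖w‖ ≤ 1 ∧ ‖F‖ / 2 ≤ ‖F w‖ := by
    intro F
    rcases eq_or_ne F 0 with h | h
    · exact ⟨0, by simp, by simp [h]⟩
    · have hF : 0 < ‖F‖ := norm_pos_iff.mpr h
      by_contra hcon
      push_neg at hcon
      have : ‖F‖ ≤ ‖F‖ / 2 := F.opNorm_le_bound (by positivity) (by
        intro x
        rcases eq_or_ne x 0 with rfl | hx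
        · simp
        · have h1 : ‖F (‖x‖⁻¹ • x)‖ < ‖F‖ / 2 := by
            apply hcon
            rw [norm_smul, norm_inv, norm_norm]
            rw [inv_mul_cancel₀ (norm_ne_zero_iff.mpr hx)]
          rw [_root_.map_smul, norm_smul, norm_inv, norm_norm] at h1
          have hx0 : (0:ℝ) < ‖x‖ := norm_pos_iff.mpr hx
          rw [inv_mul_lt_iff₀ hx0] at h1
          linarith [h1.le, mul_comm (‖F‖/2) ‖x‖])
      linarith
  choose wv hwv1 hwv2 using hpick
  -- the closed span of the chosen vectors is everything
  set M : Submodule ℝ W := (Submodule.span ℝ (wv '' S)).topologicalClosure with hM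
  have hMtop : M = ⊤ := by
    by_contra hne
    obtain ⟨w, hw⟩ : ∃ w : W, w ∉ M := by
      by_contra hall
      push_neg at hall
      exact hne (Submodule.eq_top_iff'.mpr hall)
    obtain ⟨F, hF0, hFw⟩ := aux_sep M (Submodule.isClosed_topologicalClosure _) hw
    have hFpos : 0 < ‖F‖ := norm_pos_iff.mpr (by
      intro h; rw [h] at hFw; exact hFw rfl)
    obtain ⟨f, hfS, hfd⟩ : ∃ f ∈ S, f ∈ Metric.ball F (‖F‖ / 4) := by
      have hb : (Metric.ball F (‖F‖/4)).Nonempty :=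
        ⟨F, Metric.mem_ball_self (by positivity)⟩
      exact hSdense.exists_mem_open Metric.isOpen_ball hb
    have hdist : ‖f - F‖ < ‖F‖ / 4 := by
      rw [Metric.mem_ball, dist_eq_norm] at hfd; exact hfd
    have hfnorm : ‖F‖ - ‖F‖ / 4 ≤ ‖f‖ := by
      have := norm_sub_norm_le f F
      have h2 : ‖F‖ ≤ ‖f‖ + ‖f - F‖ := by
        calc ‖F‖ = ‖f - (f - F)‖ := by congr 1; abel
        _ ≤ ‖f‖ + ‖f - F‖ := norm_sub_le _ _
      linarith
    -- the chosen vector for f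
    have hwM : wv f ∈ M := by
      apply Submodule.le_topologicalClosure
      exact Submodule.subset_span ⟨f, hfS, rfl⟩
    have hFwv : F (wv f) = 0 := hF0 _ hwM
    have h3 : ‖f‖ / 2 ≤ ‖f (wv f)‖ := hwv2 f
    have h4 : ‖f (wv f)‖ = ‖(f - F) (wv f)‖ := by simp [hFwv]
    have h5 : ‖(f - F) (wv f)‖ ≤ ‖f - F‖ := by
      calc ‖(f - F) (wv f)‖ ≤ ‖f - F‖ * ‖wv f‖ := (f - F).le_opNorm _
      _ ≤ ‖f - F‖ * 1 := by
          exact mul_le_mul_of_nonneg_left (hwv1 f) (norm_nonneg _)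
      _ = ‖f - F‖ := mul_one _
    linarith
  -- conclude separability
  have hsep : IsSeparable (M : Set W) := by
    rw [hM, Submodule.topologicalClosure_coe]
    exact ((hScount.image wv).isSeparable.span (R := ℝ)).closure
  rw [hMtop] at hsep
  have : IsSeparable (Set.univ : Set W) := by simpa using hsep
  rw [← isSeparable_univ_iff]
  exact this

end AuxSep

/-- Diagonal argument: from a family of (per-index) bounded real sequences, extract a single
subsequence along which every one of them converges. -/
lemma aux_diagonal (g : ℕ → ℕ → ℝ) (C : ℕ → ℝ) (hb : ∀ n k, |g n k| ≤ C n) :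
    ∃ σ : ℕ → ℕ, StrictMono σ ∧ ∀ n, ∃ l, Tendsto (fun k => g n (σ k)) atTop (nhds l) := by
  have step : ∀ (n : ℕ) (s : ℕ → ℕ), ∃ τ : ℕ → ℕ, StrictMono τ ∧
      ∃ l, Tendsto (fun k => g n (s (τ k))) atTop (nhds l) := by
    intro n s
    have hbdd : Bornology.IsBounded (Set.Icc (-(C n)) (C n)) := Metric.isBounded_Icc _ _
    have hmem : ∀ k, g n (s k) ∈ Set.Icc (-(C n)) (C n) := by
      intro k; exact abs_le.mp (hb n (s k))
    obtain ⟨l, -, τ, hτ, hconv⟩ := tendsto_subseq_of_bounded hbdd hmem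
    exact ⟨τ, hτ, l, hconv⟩
  choose τf hτmono hτconv using step
  set Φ : ℕ → ℕ → ℕ := fun n => Nat.rec (τf 0 id) (fun m Φm => Φm ∘ τf (m+1) Φm) n with hΦ
  have hΦ0 : Φ 0 = τf 0 id := rfl
  have hΦs : ∀ n, Φ (n+1) = Φ n ∘ τf (n+1) (Φ n) := fun n => rfl
  have hmono : ∀ n, StrictMono (Φ n) := by
    intro n; induction n with
    | zero => exact hτmono 0 id
    | succ m ih => rw [hΦs m]; exact ih.comp (hτmono (m+1) (Φ m))
  have hconv : ∀ n, ∃ l, Tendsto (fun k => g n (Φ n k)) atTop (nhds l) := by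
    intro n
    cases n with
    | zero => exact hτconv 0 id
    | succ m =>
      obtain ⟨l, hl⟩ := hτconv (m+1) (Φ m)
      exact ⟨l, by rw [hΦs m]; exact hl⟩
  -- key: for k ≥ n, Φ k j is a value of Φ n at a large index
  have hfactor : ∀ n k j, n ≤ k → ∃ i, j ≤ i ∧ Φ k j = Φ n i := by
    intro n k
    induction k with
    | zero => intro j h; exact ⟨j, le_rfl, by rw [Nat.le_zero.mp h]⟩
    | succ m ih =>
      intro j h
      rcases Nat.lt_or_ge n (m+1) with h' | h'
      · have hn : n ≤ m := Nat.lt_succ_iff.mp h'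
        obtain ⟨i, hi, heq⟩ := ih (τf (m+1) (Φ m) j) hn
        refine ⟨i, le_trans ((hτmono (m+1) (Φ m)).le_apply) hi, ?_⟩
        rw [hΦs m]; exact heq
      · have : n = m+1 := le_antisymm h h'
        subst this; exact ⟨j, le_rfl, rfl⟩
  refine ⟨fun k => Φ k k, ?_, ?_⟩
  · intro a b hab
    have h1 : Φ a a < Φ a b := hmono a hab
    have h2 : Φ a b ≤ Φ b b := by
      obtain ⟨i, hi, heq⟩ := hfactor a b b hab.le
      rw [heq]
      exact (hmono a).monotone hi
    exact lt_of_lt_of_le h1 h2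
  · intro n
    obtain ⟨l, hl⟩ := hconv n
    refine ⟨l, ?_⟩
    rw [Metric.tendsto_atTop] at hl ⊢
    intro ε hε
    obtain ⟨N, hN⟩ := hl ε hε
    refine ⟨max n N, fun k hk => ?_⟩
    obtain ⟨i, hi, heq⟩ := hfactor n k k (le_trans (le_max_left _ _) hk)
    simp only []
    rw [heq]
    exact hN i (le_trans (le_trans (le_max_right _ _) hk) hi)

/-- Bounded sequences in a reflexive space have weakly convergent subsequences. -/
lemma aux_weak_seq_compact {X : Type*} [NormedAddCommGroup X] [NormedSpace ℝ X]
    (hrefl : Function.Surjective (inclusionInDoubleDual ℝ X))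
    (y : ℕ → X) (C : ℝ) (hC : ∀ k, ‖y k‖ ≤ C) :
    ∃ (x : X) (σ : ℕ → ℕ), StrictMono σ ∧
      ∀ φ : X →L[ℝ] ℝ, Tendsto (fun k => φ (y (σ k))) atTop (nhds (φ x)) := by
  have hC0 : 0 ≤ C := le_trans (norm_nonneg _) (hC 0)
  set Y : Submodule ℝ X := (Submodule.span ℝ (Set.range y)).topologicalClosure with hYdef
  have hYc : IsClosed (Y : Set X) := Submodule.isClosed_topologicalClosure _
  have hymem : ∀ k, y k ∈ Y := fun k =>
    Submodule.le_topologicalClosure _ (Submodule.subset_span ⟨k, rfl⟩)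
  set yY : ℕ → Y := fun k => ⟨y k, hymem k⟩ with hyY
  have hyYnorm : ∀ k, ‖yY k‖ = ‖y k‖ := fun k => rfl
  haveI hsepY : SeparableSpace Y := by
    have h1 : IsSeparable (Y : Set X) := by
      rw [hYdef, Submodule.topologicalClosure_coe]
      exact ((Set.countable_range y).isSeparable.span (R := ℝ)).closure
    exact h1.separableSpace
  have hreflY : Function.Surjective (inclusionInDoubleDual ℝ Y) :=
    aux_subspace_reflexive hrefl Y hYc
  haveI : SeparableSpace (StrongDual ℝ (StrongDual ℝ Y)) := by
    have hJd : DenseRange (inclusionInDoubleDual ℝ Y) := hreflY.denseRange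
    exact hJd.separableSpace (inclusionInDoubleDual ℝ Y).continuous
  haveI : SeparableSpace (StrongDual ℝ Y) := aux_sep_of_dual_sep (W := StrongDual ℝ Y)
  set ψ : ℕ → StrongDual ℝ Y := denseSeq (StrongDual ℝ Y) with hψdef
  have hψdense : DenseRange ψ := denseRange_denseSeq (StrongDual ℝ Y)
  obtain ⟨σ, hσmono, hσconv⟩ := aux_diagonal (fun n k => ψ n (yY k)) (fun n => ‖ψ n‖ * C)
    (by
      intro n k
      calc |ψ n (yY k)| = ‖ψ n (yY k)‖ := rfl
      _ ≤ ‖ψ n‖ * ‖yY k‖ := (ψ n).le_opNorm _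
      _ ≤ ‖ψ n‖ * C := by
          apply mul_le_mul_of_nonneg_left _ (ContinuousLinearMap.opNorm_nonneg _)
          rw [hyYnorm]; exact hC k)
  -- every functional converges along σ
  have hcauchy : ∀ ψ' : StrongDual ℝ Y, ∃ l, Tendsto (fun k => ψ' (yY (σ k))) atTop (nhds l) := by
    intro ψ'
    apply cauchySeq_tendsto_of_complete
    rw [Metric.cauchySeq_iff]
    intro ε hε
    set D : ℝ := C + 1 with hD
    have hDpos : 0 < D := by linarith
    obtain ⟨n, hn⟩ : ∃ n, dist ψ' (ψ n) < ε / (3 * D) :=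
      Metric.denseRange_iff.mp hψdense ψ' (ε / (3 * D)) (by positivity)
    obtain ⟨l, hl⟩ := hσconv n
    have hlc : CauchySeq (fun k => ψ n (yY (σ k))) := hl.cauchySeq
    rw [Metric.cauchySeq_iff] at hlc
    obtain ⟨N, hN⟩ := hlc (ε / 3) (by positivity)
    refine ⟨N, fun a ha b hb => ?_⟩
    have key : ∀ k, |ψ' (yY (σ k)) - ψ n (yY (σ k))| ≤ ε / (3 * D) * C := by
      intro k
      calc |ψ' (yY (σ k)) - ψ n (yY (σ k))| = ‖(ψ' - ψ n) (yY (σ k))‖ := by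
            rw [ContinuousLinearMap.sub_apply]; rfl
      _ ≤ ‖ψ' - ψ n‖ * ‖yY (σ k)‖ := (ψ' - ψ n).le_opNorm _
      _ ≤ ε / (3 * D) * C := by
          apply mul_le_mul (le_of_lt ?_) ?_ (norm_nonneg _) (by positivity)
          · exact lt_of_eq_of_lt (dist_eq_norm ψ' (ψ n)).symm hn
          · rw [hyYnorm]; exact hC _
    have hfrac : ε / (3 * D) * C < ε / 3 := by
      rw [div_mul_eq_mul_div, mul_comm]
      rw [div_lt_div_iff₀ (by positivity) (by positivity)]
      have : C < D := by simp [hD]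
      nlinarith
    have h2 := hN a ha b hb
    have d1 := key a
    have d2 := key b
    rw [Real.dist_eq] at h2 ⊢
    have : ψ' (yY (σ a)) - ψ' (yY (σ b)) =
        (ψ' (yY (σ a)) - ψ n (yY (σ a))) + (ψ n (yY (σ a)) - ψ n (yY (σ b)))
        + (ψ n (yY (σ b)) - ψ' (yY (σ b))) := by ring
    rw [this]
    calc |_| ≤ |ψ' (yY (σ a)) - ψ n (yY (σ a))| + |ψ n (yY (σ a)) - ψ n (yY (σ b))|
        + |ψ n (yY (σ b)) - ψ' (yY (σ b))| := by
          exact (abs_add_le _ _).trans (by gcongr; exact abs_add_le _ _)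
    _ < ε / 3 + ε / 3 + ε / 3 := by
        have d2' : |ψ n (yY (σ b)) - ψ' (yY (σ b))| ≤ ε / (3*D) * C := by
          rw [abs_sub_comm]; exact d2
        have := hfrac
        gcongr <;> linarith
    _ = ε := by ring
  choose L0 hL0 using hcauchy
  -- L0 is linear and bounded
  have hadd : ∀ ψ₁ ψ₂ : StrongDual ℝ Y, L0 (ψ₁ + ψ₂) = L0 ψ₁ + L0 ψ₂ := by
    intro ψ₁ ψ₂
    refine tendsto_nhds_unique (hL0 (ψ₁ + ψ₂)) ?_
    have := (hL0 ψ₁).add (hL0 ψ₂)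
    simpa [ContinuousLinearMap.add_apply] using this
  have hsmul : ∀ (c : ℝ) (ψ' : StrongDual ℝ Y), L0 (c • ψ') = c * L0 ψ' := by
    intro c ψ'
    refine tendsto_nhds_unique (hL0 (c • ψ')) ?_
    have := (hL0 ψ').const_mul c
    simpa [ContinuousLinearMap.smul_apply, smul_eq_mul] using this
  have hbound : ∀ ψ' : StrongDual ℝ Y, |L0 ψ'| ≤ C * ‖ψ'‖ := by
    intro ψ'
    have h1 : Tendsto (fun k => |ψ' (yY (σ k))|) atTop (nhds (|L0 ψ'|)) :=
      (hL0 ψ').abs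
    apply le_of_tendsto h1
    filter_upwards with k
    calc |ψ' (yY (σ k))| ≤ ‖ψ'‖ * ‖yY (σ k)‖ := (ψ' ).le_opNorm _
    _ ≤ ‖ψ'‖ * C := by
        apply mul_le_mul_of_nonneg_left _ (ContinuousLinearMap.opNorm_nonneg _)
        rw [hyYnorm]; exact hC _
    _ = C * ‖ψ'‖ := mul_comm _ _
  set L : StrongDual ℝ Y →ₗ[ℝ] ℝ :=
    { toFun := L0, map_add' := hadd, map_smul' := hsmul } with hLdef
  set Lc : StrongDual ℝ (StrongDual ℝ Y) := L.mkContinuous C (fun ψ' => (by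
    rw [Real.norm_eq_abs]; exact hbound ψ' : ‖L ψ'‖ ≤ C * ‖ψ'‖)) with hLcdef
  obtain ⟨yhat, hyhat⟩ := hreflY Lc
  have hyhat' : ∀ ψ' : StrongDual ℝ Y, ψ' yhat = L0 ψ' := by
    intro ψ'
    have := congrArg (fun T => T ψ') hyhat
    exact this
  refine ⟨(yhat : X), σ, hσmono, ?_⟩
  intro φ
  set ψ' : StrongDual ℝ Y := φ.comp Y.subtypeL with hψ'
  have h1 : ∀ k, φ (y (σ k)) = ψ' (yY (σ k)) := fun k => rfl
  have h2 : φ (yhat : X) = ψ' yhat := rfl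
  rw [h2, hyhat' ψ']
  simpa [h1] using hL0 ψ'


/-- **penalization step in Theorem 5.3.** Let `X` be a
reflexive Banach space whose squared norm is `C¹`, `f : X → ℝ` and
`x ↦ ‖g₊(x)‖` weakly sequentially lsc with `f` and `g : X → L²(Ω)` continuously
Fréchet differentiable. Let `xbar` be a local minimizer of `f` over the
feasible set `{x : g(x)₊ = 0}` within the closed ball `B_r(xbar)`, and for each
`k` let `xᵏ` minimize `f(x) + k‖g₊(x)‖² + ‖x - xbar‖²` over `B_r(xbar)`.
Then some subsequence of `(xᵏ)` converges strongly to `xbar`. -/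
theorem penalized_minimizers_subseq_tendsto
    {X : Type*} [NormedAddCommGroup X] [NormedSpace ℝ X] [CompleteSpace X]
    (hrefl : Function.Surjective (NormedSpace.inclusionInDoubleDual ℝ X))
    (hq : ContDiff ℝ 1 (fun x : X => ‖x‖ ^ 2))
    {Ω : Type*} [MeasurableSpace Ω] (μ : Measure Ω)
    (f : X → ℝ) (g : X → Lp ℝ 2 μ)
    (hf : ContDiff ℝ 1 f) (hg : ContDiff ℝ 1 g)
    (hflsc : ∀ (x : X) (xk : ℕ → X),
      (∀ φ : X →L[ℝ] ℝ, Tendsto (fun k => φ (xk k)) atTop (nhds (φ x))) →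
      f x ≤ atTop.liminf (fun k => f (xk k)))
    (hglsc : ∀ (x : X) (xk : ℕ → X),
      (∀ φ : X →L[ℝ] ℝ, Tendsto (fun k => φ (xk k)) atTop (nhds (φ x))) →
      ‖(g x) ⊔ 0‖ ≤ atTop.liminf (fun k => ‖(g (xk k)) ⊔ 0‖))
    (xbar : X) (r : ℝ) (hr : 0 < r)
    (hfeas : (g xbar) ⊔ 0 = 0)
    (hlocmin : ∀ x ∈ closedBall xbar r, (g x) ⊔ 0 = 0 → f xbar ≤ f x)
    (xs : ℕ → X)
    (hxs : ∀ k : ℕ, xs k ∈ closedBall xbar r ∧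
      ∀ x ∈ closedBall xbar r,
        f (xs k) + (k : ℝ) * ‖(g (xs k)) ⊔ 0‖ ^ 2 + ‖xs k - xbar‖ ^ 2 ≤
          f x + (k : ℝ) * ‖(g x) ⊔ 0‖ ^ 2 + ‖x - xbar‖ ^ 2) :
    ∃ φs : ℕ → ℕ, StrictMono φs ∧
      Tendsto (fun n => xs (φs n)) atTop (nhds xbar) := by
  have hcb : xbar ∈ closedBall xbar r := mem_closedBall_self hr.le
  have key : ∀ k : ℕ, f (xs k) + (k : ℝ) * ‖(g (xs k)) ⊔ 0‖ ^ 2 + ‖xs k - xbar‖ ^ 2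
      ≤ f xbar := by
    intro k
    have := (hxs k).2 xbar hcb
    rw [hfeas] at this
    simpa using this
  have hd : ∀ k, ‖xs k - xbar‖ ≤ r := by
    intro k
    have := (hxs k).1
    rwa [mem_closedBall, dist_eq_norm] at this
  have hbound : ∀ k, ‖xs k‖ ≤ ‖xbar‖ + r := by
    intro k
    calc ‖xs k‖ = ‖(xs k - xbar) + xbar‖ := by rw [sub_add_cancel]
    _ ≤ ‖xs k - xbar‖ + ‖xbar‖ := norm_add_le _ _
    _ ≤ ‖xbar‖ + r := by linarith [hd k]
  obtain ⟨xt, σ, hσ, hw⟩ := aux_weak_seq_compact hrefl xs (‖xbar‖ + r) hbound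
  have hfl : f xt ≤ atTop.liminf (fun k => f (xs (σ k))) := hflsc xt _ hw
  -- nonnegativity of the extra terms
  have hnn : ∀ k : ℕ, 0 ≤ (k : ℝ) * ‖(g (xs k)) ⊔ 0‖ ^ 2 := fun k => by positivity
  have hnn2 : ∀ k : ℕ, 0 ≤ ‖xs k - xbar‖ ^ 2 := fun k => by positivity
  have Fb : ∀ k, f (xs (σ k)) ≤ f xbar := by
    intro k
    have := key (σ k)
    nlinarith [hnn (σ k), hnn2 (σ k)]
  -- uniform lower bound on f along the minimizers, from the k = 0 minimizer
  have hlow : ∀ k, f (xs 0) + ‖xs 0 - xbar‖ ^ 2 - r ^ 2 ≤ f (xs k) := by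
    intro k
    have h0 := (hxs 0).2 (xs k) (hxs k).1
    simp only [Nat.cast_zero, zero_mul, zero_add, add_zero] at h0
    have hd2 : ‖xs k - xbar‖ ^ 2 ≤ r ^ 2 := by
      have := hd k
      nlinarith [norm_nonneg (xs k - xbar)]
    nlinarith
  have hbdd : IsBoundedUnder (· ≥ ·) atTop (fun k => f (xs (σ k))) :=
    Filter.isBoundedUnder_of ⟨f (xs 0) + ‖xs 0 - xbar‖ ^ 2 - r ^ 2, fun k => hlow (σ k)⟩
  have heps : ∀ ε : ℝ, 0 < ε → ∀ᶠ k in atTop, f xt - ε < f (xs (σ k)) := by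
    intro ε hε
    exact eventually_lt_of_lt_liminf (lt_of_lt_of_le (by linarith) hfl) hbdd
  -- the penalty term tends to zero along σ
  have hgtend : Tendsto (fun k => ‖(g (xs (σ k))) ⊔ 0‖) atTop (nhds 0) := by
    set B : ℝ := f xbar - f xt + 1 with hB
    have hsq : Tendsto (fun k => ‖(g (xs (σ k))) ⊔ 0‖ ^ 2) atTop (nhds 0) := by
      apply squeeze_zero' (Filter.Eventually.of_forall (fun k => by positivity))
        ?_ (tendsto_const_div_atTop_nhds_zero_nat B)
      filter_upwards [heps 1 one_pos, Filter.eventually_ge_atTop 1] with k hk hk1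
      have hkey := key (σ k)
      have hσk : (k : ℝ) ≤ (σ k : ℝ) := by exact_mod_cast (hσ.le_apply)
      have h1 : (σ k : ℝ) * ‖(g (xs (σ k))) ⊔ 0‖ ^ 2 ≤ B := by
        nlinarith [hnn2 (σ k)]
      have hkpos : (0:ℝ) < (k : ℝ) := by exact_mod_cast hk1
      rw [le_div_iff₀ hkpos]
      have : (k : ℝ) * ‖(g (xs (σ k))) ⊔ 0‖ ^ 2 ≤ (σ k : ℝ) * ‖(g (xs (σ k))) ⊔ 0‖ ^ 2 := by
        apply mul_le_mul_of_nonneg_right hσk (by positivity)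
      linarith [this, h1]
    have := hsq.sqrt
    rw [Real.sqrt_zero] at this
    convert this using 2 with k
    rw [Real.sqrt_sq (norm_nonneg _)]
  have hliminf0 : atTop.liminf (fun k => ‖(g (xs (σ k))) ⊔ 0‖) = 0 := hgtend.liminf_eq
  have hfeas_xt : (g xt) ⊔ 0 = 0 := by
    have := hglsc xt _ hw
    rw [hliminf0] at this
    exact norm_le_zero_iff.mp this
  have hmem_xt : xt ∈ closedBall xbar r := by
    rw [mem_closedBall, dist_eq_norm]
    apply norm_le_dual_bound ℝ (xt - xbar) hr.le
    intro φ
    have h1 : Tendsto (fun k => φ (xs (σ k) - xbar)) atTop (nhds (φ (xt - xbar))) := by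
      simp only [map_sub]
      exact (hw φ).sub tendsto_const_nhds
    have h2 : Tendsto (fun k => ‖φ (xs (σ k) - xbar)‖) atTop (nhds ‖φ (xt - xbar)‖) :=
      h1.norm
    apply le_of_tendsto h2
    filter_upwards with k
    calc ‖φ (xs (σ k) - xbar)‖ ≤ ‖φ‖ * ‖xs (σ k) - xbar‖ := φ.le_opNorm _
    _ ≤ ‖φ‖ * r := mul_le_mul_of_nonneg_left (hd _) (norm_nonneg _)
    _ = r * ‖φ‖ := mul_comm _ _
  have hge : f xbar ≤ f xt := hlocmin xt hmem_xt hfeas_xt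
  -- strong convergence
  have hdsq : Tendsto (fun k => ‖xs (σ k) - xbar‖ ^ 2) atTop (nhds 0) := by
    rw [Metric.tendsto_atTop]
    intro ε hε
    obtain ⟨N, hN⟩ := (heps (ε/2) (by positivity)).exists_forall_of_atTop
    refine ⟨N, fun k hk => ?_⟩
    have h1 := hN k hk
    have hkey := key (σ k)
    have h2 : ‖xs (σ k) - xbar‖ ^ 2 ≤ f xbar - f (xs (σ k)) := by
      nlinarith [hnn (σ k)]
    rw [Real.dist_eq, sub_zero,
      abs_of_nonneg (by positivity : (0:ℝ) ≤ ‖xs (σ k) - xbar‖ ^ 2)]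
    linarith
  have hdist : Tendsto (fun k => ‖xs (σ k) - xbar‖) atTop (nhds 0) := by
    have := hdsq.sqrt
    rw [Real.sqrt_zero] at this
    convert this using 2 with k
    rw [Real.sqrt_sq (norm_nonneg _)]
  refine ⟨σ, hσ, ?_⟩
  rw [tendsto_iff_norm_sub_tendsto_zero]
  exact hdist
end

section
/- Let X be a Banach space, Z = L²(Ω), f : X → ℝ and g : X → Z continuously Fréchet differentiable. Let (x^{k+1}) be generated with multipliers λ^{k+1} = (wᵏ + ρₖ g(x^{k+1}))₊, where (wᵏ) is bounded in Z and ρₖ → ∞. Suppose f'(x^{k+1}) + g'(x^{k+1})* λ^{k+1} → 0 in X* and x^{k+1} → x̄ strongly along a subsequence. Then g'(x̄)* g₊(x̄) = 0, i.e., x̄ is a stationary point of the constraint violation x ↦ ‖g₊(x)‖²_Z. -/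
open MeasureTheory Filter

set_option maxHeartbeats 1000000
set_option synthInstance.maxHeartbeats 200000

lemma real_smul_sup_of_pos {c : ℝ} (hc : 0 < c) (a b : ℝ) :
    c • (a ⊔ b) = c • a ⊔ c • b :=
  (OrderIso.smulRight hc).map_sup a b

lemma Lp_smul_sup_of_pos {Ω : Type*} [MeasurableSpace Ω] {μ : Measure Ω} {p : ENNReal}
    {c : ℝ} (hc : 0 < c) (a b : Lp ℝ p μ) : c • (a ⊔ b) = c • a ⊔ c • b := by
  apply Lp.ext
  filter_upwards [Lp.coeFn_smul c (a ⊔ b), Lp.coeFn_sup a b, Lp.coeFn_smul c a,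
    Lp.coeFn_smul c b, Lp.coeFn_sup (c • a) (c • b)] with ω h1 h2 h3 h4 h5
  rw [h1, h5]
  simp only [Pi.smul_apply, Pi.sup_apply, h2, h3, h4]
  exact real_smul_sup_of_pos hc _ _

/-- **Theorem 6.2, case `ρₖ → ∞`.** Let `f : X → ℝ`,
`g : X → Z = L²(Ω)` be continuously Fréchet differentiable, and let the
multipliers be `λ^{k+1} = (wᵏ + ρₖ g(x^{k+1}))₊` with `(wᵏ)` bounded and
`ρₖ → ∞`. If the stationarity residuals
`f'(x^{k+1}) + g'(x^{k+1})* λ^{k+1}` tend to `0` in `X*` and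
`x^{k+1} → xbar` strongly along a subsequence, then
`g'(xbar)* g₊(xbar) = 0`, i.e. `xbar` is stationary for `x ↦ ‖g₊(x)‖²`. -/
theorem limit_stationary_for_constraint_violation
    {X : Type*} [NormedAddCommGroup X] [NormedSpace ℝ X] [CompleteSpace X]
    {Ω : Type*} [MeasurableSpace Ω] (μ : Measure Ω)
    (f : X → ℝ) (g : X → Lp ℝ 2 μ)
    (f' : X → (X →L[ℝ] ℝ)) (g' : X → (X →L[ℝ] Lp ℝ 2 μ))
    (hf : ∀ x, HasFDerivAt f (f' x) x) (hf'c : Continuous f')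
    (hg : ∀ x, HasFDerivAt g (g' x) x) (hg'c : Continuous g')
    (ρ : ℕ → ℝ) (hρpos : ∀ k, 0 < ρ k) (hρ : Tendsto ρ atTop atTop)
    (w : ℕ → Lp ℝ 2 μ) (hw : ∃ C : ℝ, ∀ k, ‖w k‖ ≤ C)
    (xs : ℕ → X)
    (hres : Tendsto
      (fun k => f' (xs (k + 1)) +
        (innerSL ℝ ((w k + ρ k • g (xs (k + 1))) ⊔ 0)).comp (g' (xs (k + 1))))
      atTop (nhds 0))
    (xbar : X) (φs : ℕ → ℕ) (hφs : StrictMono φs)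
    (hconv : Tendsto (fun n => xs (φs n + 1)) atTop (nhds xbar)) :
    (innerSL ℝ ((g xbar) ⊔ 0)).comp (g' xbar) = 0 := by
  obtain ⟨C, hC⟩ := hw
  -- g is continuous
  have hgc : Continuous g := continuous_iff_continuousAt.mpr fun x => (hg x).continuousAt
  -- inverse of ρ along the subsequence tends to 0
  have hρφ : Tendsto (fun n => ρ (φs n)) atTop atTop := hρ.comp hφs.tendsto_atTop
  have hinv : Tendsto (fun n => (ρ (φs n))⁻¹) atTop (nhds 0) := hρφ.inv_tendsto_atTop
  -- the scaled residual sequence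
  set T : ℕ → (X →L[ℝ] ℝ) := fun n => (ρ (φs n))⁻¹ •
    (f' (xs (φs n + 1)) +
      (innerSL ℝ ((w (φs n) + ρ (φs n) • g (xs (φs n + 1))) ⊔ 0)).comp (g' (xs (φs n + 1))))
    with hT
  -- first limit: T → 0
  have h1 : Tendsto T atTop (nhds 0) := by
    have := hinv.smul (hres.comp hφs.tendsto_atTop)
    rw [hT]
    simpa using this
  -- rewrite T n
  have hTeq : ∀ n, T n = (ρ (φs n))⁻¹ • f' (xs (φs n + 1)) +
      (innerSL ℝ (((ρ (φs n))⁻¹ • w (φs n) + g (xs (φs n + 1))) ⊔ 0)).comp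
        (g' (xs (φs n + 1))) := by
    intro n
    have hρn := hρpos (φs n)
    have key : (ρ (φs n))⁻¹ • ((w (φs n) + ρ (φs n) • g (xs (φs n + 1))) ⊔ 0)
        = ((ρ (φs n))⁻¹ • w (φs n) + g (xs (φs n + 1))) ⊔ 0 := by
      rw [Lp_smul_sup_of_pos (inv_pos.mpr hρn), smul_zero, smul_add, smul_smul,
        inv_mul_cancel₀ hρn.ne', one_smul]
    ext y
    simp only [hT, ContinuousLinearMap.smul_apply, ContinuousLinearMap.add_apply,
      ContinuousLinearMap.comp_apply, smul_add]
    congr 1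
    rw [← key, innerSL_apply_apply, innerSL_apply_apply, real_inner_smul_left]
    rfl
  -- second limit: T → target
  have hw0 : Tendsto (fun n => (ρ (φs n))⁻¹ • w (φs n)) atTop (nhds 0) := by
    apply squeeze_zero_norm (a := fun n => (ρ (φs n))⁻¹ * C)
    · intro n
      rw [norm_smul]
      have h1 : (0:ℝ) ≤ (ρ (φs n))⁻¹ := (inv_pos.mpr (hρpos (φs n))).le
      calc ‖(ρ (φs n))⁻¹‖ * ‖w (φs n)‖ = (ρ (φs n))⁻¹ * ‖w (φs n)‖ := by
            rw [Real.norm_of_nonneg h1]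
        _ ≤ (ρ (φs n))⁻¹ * C := by
            exact mul_le_mul_of_nonneg_left (hC (φs n)) h1
    · simpa using hinv.mul tendsto_const_nhds
  have hgφ : Tendsto (fun n => g (xs (φs n + 1))) atTop (nhds (g xbar)) :=
    (hgc.tendsto xbar).comp hconv
  have hlam : Tendsto (fun n => ((ρ (φs n))⁻¹ • w (φs n) + g (xs (φs n + 1))) ⊔ 0)
      atTop (nhds (g xbar ⊔ 0)) := by
    have hsum : Tendsto (fun n => (ρ (φs n))⁻¹ • w (φs n) + g (xs (φs n + 1))) atTop
        (nhds (g xbar)) := by simpa using hw0.add hgφ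
    exact hsum.sup_nhds tendsto_const_nhds
  have hinner : Tendsto
      (fun n => innerSL ℝ (((ρ (φs n))⁻¹ • w (φs n) + g (xs (φs n + 1))) ⊔ 0))
      atTop (nhds (innerSL ℝ (g xbar ⊔ 0))) :=
    ((innerSL ℝ).continuous.tendsto _).comp hlam
  have hg'φ : Tendsto (fun n => g' (xs (φs n + 1))) atTop (nhds (g' xbar)) :=
    (hg'c.tendsto xbar).comp hconv
  have hcomp : Tendsto
      (fun n => (innerSL ℝ (((ρ (φs n))⁻¹ • w (φs n) + g (xs (φs n + 1))) ⊔ 0)).comp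
        (g' (xs (φs n + 1))))
      atTop (nhds ((innerSL ℝ (g xbar ⊔ 0)).comp (g' xbar))) := by
    have hb : Continuous (fun p : (Lp ℝ 2 μ →L[ℝ] ℝ) × (X →L[ℝ] Lp ℝ 2 μ) => p.1.comp p.2) :=
      isBoundedBilinearMap_comp.continuous
    exact (hb.tendsto _).comp (hinner.prodMk_nhds hg'φ)
  have hf'φ : Tendsto (fun n => (ρ (φs n))⁻¹ • f' (xs (φs n + 1))) atTop (nhds 0) := by
    have := hinv.smul ((hf'c.tendsto xbar).comp hconv)
    simpa using this
  have h2 : Tendsto T atTop (nhds ((innerSL ℝ (g xbar ⊔ 0)).comp (g' xbar))) := by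
    have := hf'φ.add hcomp
    rw [zero_add] at this
    exact this.congr fun n => (hTeq n).symm
  exact (tendsto_nhds_unique h1 h2).symm
end

section
/- Let Ω be a measure space, let g : X → L²(Ω) be continuous from a metric space X, let (wᵏ) ⊆ L²(Ω) be bounded with wᵏ ≥ 0, ρₖ → ∞, and x^{k+1} → x̄ with g(x̄) ≤ 0 a.e. Assume (after passing to a subsequence) g(x^{k+1}) → g(x̄) pointwise a.e. with an L²-dominating function and wᵏ → w̄ pointwise a.e. Then ⟨(wᵏ + ρₖ g(x^{k+1}))₊, g(x^{k+1})₋⟩ → 0, where z₋ = max{−z, 0}. -/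
open MeasureTheory Filter

lemma pointwise_key (a b r : ℝ) (hr : 0 < r) :
    max (a + r * b) 0 * max (-b) 0 ≤ a ^ 2 / r := by
  have hdiv : 0 ≤ a ^ 2 / r := by positivity
  rcases le_or_gt 0 b with hb | hb
  · rw [max_eq_right (by linarith : -b ≤ 0), mul_zero]; exact hdiv
  · rcases le_or_gt (a + r * b) 0 with h | h
    · rw [max_eq_right h, zero_mul]; exact hdiv
    · rw [max_eq_left h.le, max_eq_left (by linarith : (0:ℝ) ≤ -b), le_div_iff₀ hr]
      nlinarith [sq_nonneg (a + r * b), sq_nonneg (r * b),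
        mul_nonneg h.le (mul_nonneg hr.le (neg_nonneg.mpr hb.le))]

/-- **asymptotic complementarity, Theorem 6.3.** Let
`g : X → L²(Ω)` be continuous from a metric space `X`, `(wᵏ) ⊆ L²(Ω)` bounded
and nonnegative, `ρₖ → ∞`, `x^{k+1} → xbar` with `g(xbar) ≤ 0` a.e.
Assume `g(x^{k+1}) → g(xbar)` pointwise a.e. with an `L²`-dominating function
and `wᵏ → w̄` pointwise a.e. Then
`⟪(wᵏ + ρₖ g(x^{k+1}))₊, g(x^{k+1})₋⟫ → 0`. -/
theorem asymptotic_complementarity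
    {X : Type*} [MetricSpace X]
    {Ω : Type*} [MeasurableSpace Ω] (μ : Measure Ω)
    (g : X → Lp ℝ 2 μ) (hg : Continuous g)
    (w : ℕ → Lp ℝ 2 μ) (hwbd : ∃ C : ℝ, ∀ k, ‖w k‖ ≤ C)
    (hwpos : ∀ k, (0 : Lp ℝ 2 μ) ≤ w k)
    (ρ : ℕ → ℝ) (hρpos : ∀ k, 0 < ρ k) (hρ : Tendsto ρ atTop atTop)
    (xs : ℕ → X) (xbar : X) (hconv : Tendsto (fun k => xs (k + 1)) atTop (nhds xbar))
    (hfeas : ∀ᵐ t ∂μ, (g xbar : Ω → ℝ) t ≤ 0)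
    (hptg : ∀ᵐ t ∂μ,
      Tendsto (fun k => (g (xs (k + 1)) : Ω → ℝ) t) atTop (nhds ((g xbar : Ω → ℝ) t)))
    (hdom : ∃ G : Ω → ℝ, MemLp G 2 μ ∧
      ∀ k, ∀ᵐ t ∂μ, |(g (xs (k + 1)) : Ω → ℝ) t| ≤ G t)
    (wbar : Ω → ℝ)
    (hptw : ∀ᵐ t ∂μ, Tendsto (fun k => (w k : Ω → ℝ) t) atTop (nhds (wbar t))) :
    Tendsto
      (fun k => (inner ℝ ((w k + ρ k • g (xs (k + 1))) ⊔ 0)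
        ((-(g (xs (k + 1)))) ⊔ 0) : ℝ)) atTop (nhds 0) := by
  obtain ⟨C0, hC0⟩ := hwbd
  set C : ℝ := max C0 0 with hCdef
  have hCnn : 0 ≤ C := le_max_right _ _
  have hwC : ∀ k, ‖w k‖ ≤ C := fun k => (hC0 k).trans (le_max_left _ _)
  set f : ℕ → Lp ℝ 2 μ := fun k => g (xs (k + 1)) with hf
  have hinner : ∀ F G : Lp ℝ 2 μ, (inner ℝ F G : ℝ) = ∫ t, F t * G t ∂μ := by
    intro F G; rw [L2.inner_def]; simp [RCLike.inner_apply, mul_comm]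
  -- a.e. description of the two sup's
  have hu : ∀ k, (((w k + ρ k • f k) ⊔ 0 : Lp ℝ 2 μ) : Ω → ℝ)
      =ᵐ[μ] fun t => max ((w k : Ω → ℝ) t + ρ k * (f k : Ω → ℝ) t) 0 := by
    intro k
    filter_upwards [Lp.coeFn_sup (w k + ρ k • f k) (0 : Lp ℝ 2 μ),
      Lp.coeFn_add (w k) (ρ k • f k), Lp.coeFn_smul (ρ k) (f k),
      Lp.coeFn_zero ℝ 2 μ] with t h1 h2 h3 h4
    simp only [Pi.sup_apply, h1, h2, h3, h4, Pi.add_apply, Pi.smul_apply, smul_eq_mul]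
    rfl
  have hv : ∀ k, ((((-(f k)) ⊔ 0 : Lp ℝ 2 μ)) : Ω → ℝ)
      =ᵐ[μ] fun t => max (-(f k : Ω → ℝ) t) 0 := by
    intro k
    filter_upwards [Lp.coeFn_sup (-(f k)) (0 : Lp ℝ 2 μ), Lp.coeFn_neg (f k),
      Lp.coeFn_zero ℝ 2 μ] with t h1 h2 h3
    simp only [Pi.sup_apply, h1, h2, h3, Pi.neg_apply]
    rfl
  -- nonnegativity of the inner product
  have hnn : ∀ k, 0 ≤ (inner ℝ ((w k + ρ k • f k) ⊔ 0) ((-(f k)) ⊔ 0) : ℝ) := by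
    intro k
    rw [hinner]
    refine integral_nonneg_of_ae ?_
    filter_upwards [hu k, hv k] with t h1 h2
    rw [h1, h2]
    exact mul_nonneg (le_max_right _ _) (le_max_right _ _)
  -- upper bound by C^2 / ρ k
  have hub : ∀ k, (inner ℝ ((w k + ρ k • f k) ⊔ 0) ((-(f k)) ⊔ 0) : ℝ) ≤ C ^ 2 / ρ k := by
    intro k
    rw [hinner]
    have hint : Integrable (fun t => ((w k : Ω → ℝ) t) ^ 2 / ρ k) μ :=
      ((Lp.memLp (w k)).integrable_sq).div_const _
    have step1 : (∫ t, (((w k + ρ k • f k) ⊔ 0 : Lp ℝ 2 μ) : Ω → ℝ) t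
          * ((((-(f k)) ⊔ 0 : Lp ℝ 2 μ)) : Ω → ℝ) t ∂μ)
        ≤ ∫ t, ((w k : Ω → ℝ) t) ^ 2 / ρ k ∂μ := by
      refine integral_mono_of_nonneg ?_ hint ?_
      · filter_upwards [hu k, hv k] with t h1 h2
        rw [h1, h2]; exact mul_nonneg (le_max_right _ _) (le_max_right _ _)
      · filter_upwards [hu k, hv k] with t h1 h2
        rw [h1, h2]
        exact pointwise_key _ _ _ (hρpos k)
    refine step1.trans ?_
    rw [integral_div]
    gcongr
    · exact (hρpos k).le
    · have : (∫ t, ((w k : Ω → ℝ) t) ^ 2 ∂μ) = ‖w k‖ ^ 2 := by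
        rw [← real_inner_self_eq_norm_sq, hinner]
        congr 1; ext t; ring
      rw [this]
      exact pow_le_pow_left₀ (norm_nonneg _) (hwC k) 2
  have hlim : Tendsto (fun k => C ^ 2 / ρ k) atTop (nhds 0) :=
    Tendsto.div_atTop tendsto_const_nhds hρ
  exact squeeze_zero hnn hub hlim
end

section
/- Let X, Y be Banach spaces, K_Y ⊆ Y a closed convex cone with dual cone K_Y⁺ ⊆ Y*. Suppose x ∈ X is a point where g : X → Y is continuously Fréchet differentiable and the Zowe–Kurcyusz condition g'(x)X + cone(K_Y + g(x)) = Y holds, which by the open mapping principle yields r > 0 with B_r^Y ⊆ g'(x)B₁^X + (K_Y + g(x)) ∩ B₁^Y. Let (xᵏ) → x in X and (λᵏ) ⊆ K_Y⁺ satisfy f'(xᵏ) + g'(xᵏ)*λᵏ → 0 in X* and ⟨λᵏ, g₋(xᵏ)⟩ → 0 (where g₋ is the negative part with respect to the order). Then (λᵏ) is bounded in Y*. -/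
open Filter Set Pointwise

lemma robinson {E : Type*} [NormedAddCommGroup E] [NormedSpace ℝ E] [CompleteSpace E]
    {Y : Type*} [NormedAddCommGroup Y] [NormedSpace ℝ Y] [CompleteSpace Y]
    (S : E →L[ℝ] Y) (D : Set E) (hDcl : IsClosed D) (hDco : Convex ℝ D)
    (hDcone : ∀ c : ℝ, 0 ≤ c → ∀ d ∈ D, c • d ∈ D)
    (hsurj : ∀ y : Y, ∃ d ∈ D, S d = y) :
    ∃ C > 0, ∀ y : Y, ∃ d ∈ D, S d = y ∧ ‖d‖ ≤ C * ‖y‖ := by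
  have h0D : (0 : E) ∈ D := by
    obtain ⟨d, hd, -⟩ := hsurj 0
    simpa using hDcone 0 le_rfl d hd
  have hDadd : ∀ a ∈ D, ∀ b ∈ D, a + b ∈ D := by
    intro a ha b hb
    have hmid : (1/2 : ℝ) • a + (1/2 : ℝ) • b ∈ D :=
      hDco ha hb (by norm_num) (by norm_num) (by norm_num)
    have := hDcone 2 (by norm_num) _ hmid
    simpa [smul_add, smul_smul] using this
  set C1 : Set Y := S '' (D ∩ Metric.closedBall 0 1) with hC1
  have hC1conv : Convex ℝ C1 :=
    (hDco.inter (convex_closedBall _ _)).linear_image (S : E →ₗ[ℝ] Y)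
  -- covering
  have hcover : (⋃ n : ℕ, closure ((((n : ℝ) + 1)) • C1)) = univ := by
    refine eq_univ_of_forall fun y => ?_
    obtain ⟨d, hd, hSd⟩ := hsurj y
    obtain ⟨n, hn⟩ := exists_nat_ge ‖d‖
    refine mem_iUnion.2 ⟨n, subset_closure ?_⟩
    refine ⟨((n : ℝ) + 1)⁻¹ • y, ⟨((n : ℝ) + 1)⁻¹ • d, ⟨hDcone _ (by positivity) d hd, ?_⟩, by simp [hSd]⟩, ?_⟩
    · simp only [Metric.mem_closedBall, dist_zero_right, norm_smul, Real.norm_eq_abs]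
      rw [abs_of_pos (by positivity)]
      rw [inv_mul_le_iff₀ (by positivity)]
      simpa using hn.trans (by linarith)
    · exact smul_inv_smul₀ (by positivity) y
  obtain ⟨n, y₀, hy₀⟩ := nonempty_interior_of_iUnion_of_closed
    (fun n : ℕ => isClosed_closure) hcover
  have hne : ((n : ℝ) + 1) ≠ 0 := by positivity
  rw [closure_smul₀' hne, interior_smul₀ hne] at hy₀
  obtain ⟨y₁, hy₁, rfl⟩ := hy₀
  -- 0 is interior to closure C1
  have hzero : (0 : Y) ∈ interior (closure C1) := by
    have h2 : -y₁ ∈ ⋃ n : ℕ, closure ((((n : ℝ) + 1)) • C1) := hcover ▸ mem_univ _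
    obtain ⟨m, hm⟩ := mem_iUnion.1 h2
    have hmne : ((m : ℝ) + 1) ≠ 0 := by positivity
    rw [closure_smul₀' hmne] at hm
    obtain ⟨p, hp, hpm⟩ := hm
    have key := (hC1conv.closure).combo_interior_closure_mem_interior
      (x := y₁) (y := p) (a := 1/((m:ℝ)+2)) (b := ((m:ℝ)+1)/((m:ℝ)+2))
      hy₁ (subset_closure hp) (by positivity) (by positivity) (by field_simp; ring)
    have : (1/((m:ℝ)+2)) • y₁ + (((m:ℝ)+1)/((m:ℝ)+2)) • p = 0 := by
      have hp' : ((m : ℝ) + 1) • p = -y₁ := hpm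
      have : p = ((m : ℝ) + 1)⁻¹ • (-y₁) := by
        rw [← hp', inv_smul_smul₀ hmne]
      rw [this, smul_smul, smul_neg, ← neg_smul, ← add_smul]
      convert zero_smul ℝ y₁ using 2
      field_simp
      ring
    rw [this] at key
    exact key
  obtain ⟨ε, hε, hball⟩ := Metric.isOpen_iff.1 isOpen_interior 0 hzero
  set r : ℝ := ε / 2 with hr
  have hrpos : 0 < r := by positivity
  have hrC : Metric.closedBall (0 : Y) r ⊆ closure C1 := by
    intro y hy
    have h1 : dist y 0 ≤ r := Metric.mem_closedBall.1 hy
    have h2 : dist y 0 < ε := lt_of_le_of_lt h1 (by rw [hr]; linarith)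
    exact interior_subset (hball (Metric.mem_ball.2 h2))
  -- approximate solvability
  have key2 : ∀ w : Y, ∃ d, d ∈ D ∧ ‖d‖ ≤ (2 / r) * ‖w‖ ∧ ‖w - S d‖ ≤ ‖w‖ / 2 := by
    intro w
    rcases eq_or_ne w 0 with rfl | hw
    · exact ⟨0, h0D, by simp, by simp⟩
    · have hwpos : 0 < ‖w‖ := norm_pos_iff.2 hw
      have hw' : (r / ‖w‖) • w ∈ closure C1 := by
        apply hrC
        simp only [Metric.mem_closedBall, dist_zero_right, norm_smul, Real.norm_eq_abs]
        rw [abs_of_pos (by positivity)]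
        rw [div_mul_cancel₀ _ (ne_of_gt hwpos)]
      obtain ⟨c, hc, hdist⟩ := Metric.mem_closure_iff.1 hw' (r / 2) (by positivity)
      obtain ⟨d₀, ⟨hd₀D, hd₀b⟩, rfl⟩ := hc
      refine ⟨(‖w‖ / r) • d₀, hDcone _ (by positivity) _ hd₀D, ?_, ?_⟩
      · rw [norm_smul, Real.norm_eq_abs, abs_of_pos (by positivity)]
        have : ‖d₀‖ ≤ 1 := by simpa [dist_zero_right] using hd₀b
        calc ‖w‖ / r * ‖d₀‖ ≤ ‖w‖ / r * 1 := by
              apply mul_le_mul_of_nonneg_left this (by positivity)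
          _ ≤ 2 / r * ‖w‖ := by
              rw [mul_one, div_eq_mul_inv, div_eq_mul_inv]
              nlinarith [mul_nonneg hwpos.le (inv_pos.2 hrpos).le]
      · have : w - S ((‖w‖ / r) • d₀) = (‖w‖ / r) • ((r / ‖w‖) • w - S d₀) := by
          rw [smul_sub, smul_smul, div_mul_div_comm, mul_comm]
          rw [div_self (by positivity), one_smul, map_smul]
        rw [this, norm_smul, Real.norm_eq_abs, abs_of_pos (by positivity)]
        have hd : ‖(r / ‖w‖) • w - S d₀‖ ≤ r / 2 := by
          rw [← dist_eq_norm]; exact le_of_lt hdist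
        calc ‖w‖ / r * ‖(r / ‖w‖) • w - S d₀‖ ≤ ‖w‖ / r * (r / 2) := by
              apply mul_le_mul_of_nonneg_left hd (by positivity)
          _ = ‖w‖ / 2 := by field_simp
  choose F hF1 hF2 hF3 using key2
  refine ⟨4 / r, by positivity, fun y => ?_⟩
  set w : ℕ → Y := fun n => (fun v => v - S (F v))^[n] y with hwdef
  have hwsucc : ∀ n, w (n + 1) = w n - S (F (w n)) := by
    intro n
    simp only [hwdef, Function.iterate_succ_apply']
  have hwnorm : ∀ n, ‖w n‖ ≤ ‖y‖ / 2 ^ n := by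
    intro n
    induction n with
    | zero => simp [hwdef]
    | succ n ih =>
        rw [hwsucc]
        calc ‖w n - S (F (w n))‖ ≤ ‖w n‖ / 2 := hF3 _
          _ ≤ ‖y‖ / 2 ^ n / 2 := by linarith
          _ = ‖y‖ / 2 ^ (n + 1) := by ring
  have hFnorm : ∀ n, ‖F (w n)‖ ≤ (2 / r * ‖y‖) * (1 / 2) ^ n := by
    intro n
    calc ‖F (w n)‖ ≤ 2 / r * ‖w n‖ := hF2 _
      _ ≤ 2 / r * (‖y‖ / 2 ^ n) := by
          apply mul_le_mul_of_nonneg_left (hwnorm n) (by positivity)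
      _ = (2 / r * ‖y‖) * (1 / 2) ^ n := by
          rw [div_pow, one_pow]; ring
  have hsum : Summable (fun n => F (w n)) := by
    apply Summable.of_norm_bounded ((summable_geometric_two).mul_left (2 / r * ‖y‖)) hFnorm
  set d : E := ∑' n, F (w n) with hd
  have htel : ∀ n, S (∑ i ∈ Finset.range n, F (w i)) = y - w n := by
    intro n
    induction n with
    | zero => simp [hwdef]
    | succ n ih =>
        rw [Finset.sum_range_succ, map_add, ih, hwsucc]
        abel
  have hpartial : Tendsto (fun n => ∑ i ∈ Finset.range n, F (w i)) atTop (nhds d) :=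
    hsum.hasSum.tendsto_sum_nat
  have hw0 : Tendsto w atTop (nhds 0) := by
    rw [tendsto_zero_iff_norm_tendsto_zero]
    apply squeeze_zero (fun n => norm_nonneg _) hwnorm
    simpa [div_eq_mul_inv, inv_pow] using
      (tendsto_pow_atTop_nhds_zero_of_lt_one (by norm_num : (0:ℝ) ≤ 2⁻¹)
        (by norm_num : (2:ℝ)⁻¹ < 1)).const_mul ‖y‖
  have hSd : S d = y := by
    have h1 : Tendsto (fun n => S (∑ i ∈ Finset.range n, F (w i))) atTop (nhds (S d)) :=
      (S.continuous.tendsto d).comp hpartial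
    have h2 : Tendsto (fun n => y - w n) atTop (nhds (y - 0)) :=
      tendsto_const_nhds.sub hw0
    rw [sub_zero] at h2
    simp_rw [htel] at h1
    exact tendsto_nhds_unique h1 h2
  have hdD : d ∈ D := by
    apply hDcl.mem_of_tendsto hpartial
    filter_upwards with n
    induction n with
    | zero => simpa using h0D
    | succ n ih => rw [Finset.sum_range_succ]; exact hDadd _ ih _ (hF1 _)
  refine ⟨d, hdD, hSd, ?_⟩
  have hnorm : ‖d‖ ≤ ∑' n, (2 / r * ‖y‖) * (1 / 2) ^ n := by
    apply tsum_of_norm_bounded (((summable_geometric_two).mul_left (2 / r * ‖y‖)).hasSum) hFnorm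
  calc ‖d‖ ≤ ∑' n, (2 / r * ‖y‖) * (1 / 2) ^ n := hnorm
    _ = (2 / r * ‖y‖) * 2 := by rw [tsum_mul_left, tsum_geometric_two]
    _ = 4 / r * ‖y‖ := by ring

set_option maxHeartbeats 1000000 in
/-- **Theorem 5.5 (a).** Let `X, Y` be Banach spaces,
`K ⊆ Y` a closed convex cone, `f : X → ℝ` and `g : X → Y` continuously
Fréchet differentiable, `g = g₊ - g₋` with `g₊, g₋` taking values in `K`.
Suppose the Zowe–Kurcyusz condition `g'(x)X + cone(K + g(x)) = Y` holds at a
point `x`, `xᵏ → x`, the multipliers `λᵏ` lie in the dual cone `K⁺`,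
`f'(xᵏ) + g'(xᵏ)*λᵏ → 0` in `X*` and `⟨λᵏ, g₋(xᵏ)⟩ → 0`. Then `(λᵏ)` is
bounded in `Y*`. -/
theorem multipliers_bounded_of_zowe_kurcyusz
    {X : Type*} [NormedAddCommGroup X] [NormedSpace ℝ X] [CompleteSpace X]
    {Y : Type*} [NormedAddCommGroup Y] [NormedSpace ℝ Y] [CompleteSpace Y]
    (K : Set Y) (hKcl : IsClosed K) (hKco : Convex ℝ K)
    (hKcone : ∀ c : ℝ, 0 ≤ c → ∀ y ∈ K, c • y ∈ K)
    (f : X → ℝ) (g gplus gminus : X → Y)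
    (f' : X → (X →L[ℝ] ℝ)) (g' : X → (X →L[ℝ] Y))
    (hf : ∀ z, HasFDerivAt f (f' z) z) (hf'c : Continuous f')
    (hg : ∀ z, HasFDerivAt g (g' z) z) (hg'c : Continuous g')
    (hdecomp : ∀ z, g z = gplus z - gminus z ∧ gplus z ∈ K ∧ gminus z ∈ K)
    (x : X)
    -- Zowe–Kurcyusz condition: `g'(x)X + cone(K + g(x)) = Y`
    (hZK : ∀ y : Y, ∃ v : X, ∃ c : ℝ, 0 ≤ c ∧ ∃ z ∈ K,
      y = g' x v + c • (z + g x))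
    (xs : ℕ → X) (hxs : Tendsto xs atTop (nhds x))
    (lam : ℕ → (Y →L[ℝ] ℝ))
    (hdual : ∀ k, ∀ y ∈ K, 0 ≤ lam k y)
    (hres : Tendsto (fun k => f' (xs k) + (lam k).comp (g' (xs k)))
      atTop (nhds 0))
    (hcomp : Tendsto (fun k => lam k (gminus (xs k))) atTop (nhds 0)) :
    ∃ C : ℝ, ∀ k, ‖lam k‖ ≤ C := by
  classical
  -- the continuous linear map `S : X × ℝ × Y → Y`, `(v, t, w) ↦ g'(x)v + t g(x) + w`
  set S : (X × ℝ × Y) →L[ℝ] Y :=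
    (g' x).comp (ContinuousLinearMap.fst ℝ X (ℝ × Y)) +
      (ContinuousLinearMap.smulRight
        ((ContinuousLinearMap.fst ℝ ℝ Y).comp (ContinuousLinearMap.snd ℝ X (ℝ × Y))) (g x)) +
      (ContinuousLinearMap.snd ℝ ℝ Y).comp (ContinuousLinearMap.snd ℝ X (ℝ × Y)) with hSdef
  have hSapp : ∀ p : X × ℝ × Y, S p = g' x p.1 + p.2.1 • g x + p.2.2 := by
    intro p
    simp [hSdef]
  -- the closed convex cone `D`
  set D : Set (X × ℝ × Y) := {p | 0 ≤ p.2.1 ∧ p.2.2 ∈ K} with hDdef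
  have hDcl : IsClosed D := by
    have h1 : IsClosed {p : X × ℝ × Y | 0 ≤ p.2.1} :=
      isClosed_Ici.preimage (continuous_fst.comp continuous_snd)
    have h2 : IsClosed {p : X × ℝ × Y | p.2.2 ∈ K} :=
      hKcl.preimage (continuous_snd.comp continuous_snd)
    exact h1.inter h2
  have hDco : Convex ℝ D := by
    intro p hp q hq a b ha hb hab
    constructor
    · have : (a • p + b • q).2.1 = a * p.2.1 + b * q.2.1 := by simp [smul_eq_mul]
      rw [this]
      exact add_nonneg (mul_nonneg ha hp.1) (mul_nonneg hb hq.1)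
    · have : (a • p + b • q).2.2 = a • p.2.2 + b • q.2.2 := by simp
      rw [this]
      exact hKco hp.2 hq.2 ha hb hab
  have hDcone : ∀ c : ℝ, 0 ≤ c → ∀ d ∈ D, c • d ∈ D := by
    intro c hc d hd
    refine ⟨?_, ?_⟩
    · have : (c • d).2.1 = c * d.2.1 := by simp [smul_eq_mul]
      rw [this]; exact mul_nonneg hc hd.1
    · have : (c • d).2.2 = c • d.2.2 := by simp
      rw [this]; exact hKcone c hc _ hd.2
  have hsurj : ∀ y : Y, ∃ d ∈ D, S d = y := by
    intro y
    obtain ⟨v, c, hc, z, hz, hy⟩ := hZK y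
    refine ⟨(v, c, c • z), ⟨hc, hKcone c hc z hz⟩, ?_⟩
    rw [hSapp]
    simp only []
    rw [hy, smul_add]
    abel
  obtain ⟨C₀, hC₀pos, hrep⟩ := robinson S D hDcl hDco hDcone hsurj
  -- continuity of g
  have hgc : Continuous g := continuous_iff_continuousAt.2 fun z => (hg z).continuousAt
  -- abbreviations
  set A : ℕ → ℝ := fun k =>
    C₀ * (‖f' (xs k) + (lam k).comp (g' (xs k))‖ + ‖f' (xs k)‖ + lam k (gminus (xs k))) with hA
  set E : ℕ → ℝ := fun k => C₀ * (‖g' (xs k) - g' x‖ + ‖g (xs k) - g x‖) with hE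
  have hgm : ∀ k, 0 ≤ lam k (gminus (xs k)) := fun k => hdual k _ (hdecomp (xs k)).2.2
  have hAnn : ∀ k, 0 ≤ A k := by
    intro k
    apply mul_nonneg hC₀pos.le
    have := hgm k
    positivity
  have hEnn : ∀ k, 0 ≤ E k := by
    intro k
    apply mul_nonneg hC₀pos.le
    positivity
  -- the key pointwise estimate
  have hkey : ∀ k, ‖lam k‖ ≤ A k + ‖lam k‖ * E k := by
    intro k
    have hM : (0:ℝ) ≤ A k + ‖lam k‖ * E k :=
      add_nonneg (hAnn k) (mul_nonneg (norm_nonneg _) (hEnn k))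
    -- main claim: for any u of norm ≤ 1, -(lam k u) ≤ A k + ‖lam k‖ * E k
    have claim : ∀ u : Y, ‖u‖ ≤ 1 → -(lam k u) ≤ A k + ‖lam k‖ * E k := by
      intro u hu
      obtain ⟨d, hdD, hSd, hdn⟩ := hrep u
      obtain ⟨v, t, w⟩ := d
      obtain ⟨ht, hw⟩ := hdD
      simp only [] at ht hw
      have hdnorm : ‖(v, t, w)‖ ≤ C₀ := by
        calc ‖(v, t, w)‖ ≤ C₀ * ‖u‖ := hdn
          _ ≤ C₀ * 1 := by exact mul_le_mul_of_nonneg_left hu hC₀pos.le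
          _ = C₀ := mul_one _
      have hv : ‖v‖ ≤ C₀ := le_trans (norm_fst_le (v, t, w)) hdnorm
      have ht2 : t ≤ C₀ := by
        have h1 : ‖t‖ ≤ ‖((t, w) : ℝ × Y)‖ := norm_fst_le (t, w)
        have h2 : ‖((t, w) : ℝ × Y)‖ ≤ ‖(v, t, w)‖ := norm_snd_le (v, (t, w))
        calc t ≤ ‖t‖ := le_abs_self t
          _ ≤ C₀ := by linarith
      have hu' : u = g' x v + t • g x + w := by rw [← hSd, hSapp]
      have hexp : lam k u = lam k (g' x v) + t * lam k (g x) + lam k w := by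
        rw [hu']
        simp [map_add, map_smul, smul_eq_mul]
      -- bound on -(lam k (g' x v))
      set R := f' (xs k) + (lam k).comp (g' (xs k)) with hR
      have hRv : lam k (g' x v) = R v - f' (xs k) v - lam k ((g' (xs k) - g' x) v) := by
        simp only [hR, ContinuousLinearMap.add_apply, ContinuousLinearMap.comp_apply,
          ContinuousLinearMap.sub_apply, map_sub]
        ring
      have b1 : |R v| ≤ ‖R‖ * C₀ := by
        calc |R v| = ‖R v‖ := (Real.norm_eq_abs _).symm
          _ ≤ ‖R‖ * ‖v‖ := R.le_opNorm v
          _ ≤ ‖R‖ * C₀ := mul_le_mul_of_nonneg_left hv (norm_nonneg _)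
      have b2 : |f' (xs k) v| ≤ ‖f' (xs k)‖ * C₀ := by
        calc |f' (xs k) v| = ‖f' (xs k) v‖ := (Real.norm_eq_abs _).symm
          _ ≤ ‖f' (xs k)‖ * ‖v‖ := (f' (xs k)).le_opNorm v
          _ ≤ ‖f' (xs k)‖ * C₀ := mul_le_mul_of_nonneg_left hv (norm_nonneg _)
      have b3 : |lam k ((g' (xs k) - g' x) v)| ≤ ‖lam k‖ * (‖g' (xs k) - g' x‖ * C₀) := by
        calc |lam k ((g' (xs k) - g' x) v)| = ‖lam k ((g' (xs k) - g' x) v)‖ :=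
              (Real.norm_eq_abs _).symm
          _ ≤ ‖lam k‖ * ‖(g' (xs k) - g' x) v‖ := (lam k).le_opNorm _
          _ ≤ ‖lam k‖ * (‖g' (xs k) - g' x‖ * ‖v‖) := by
              apply mul_le_mul_of_nonneg_left ((g' (xs k) - g' x).le_opNorm v) (norm_nonneg _)
          _ ≤ ‖lam k‖ * (‖g' (xs k) - g' x‖ * C₀) := by
              apply mul_le_mul_of_nonneg_left _ (norm_nonneg _)
              exact mul_le_mul_of_nonneg_left hv (norm_nonneg _)
      -- bound on -(lam k (g x))
      have hgkdec := hdecomp (xs k)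
      have hgsplit : lam k (g (xs k)) = lam k (gplus (xs k)) - lam k (gminus (xs k)) := by
        rw [hgkdec.1, map_sub]
      have b4 : -(lam k (g x)) ≤ lam k (gminus (xs k)) + ‖lam k‖ * ‖g (xs k) - g x‖ := by
        have h1 : lam k (g x) = lam k (g (xs k)) - lam k (g (xs k) - g x) := by
          rw [map_sub]; ring
        have h2 : 0 ≤ lam k (gplus (xs k)) := hdual k _ hgkdec.2.1
        have h3 : |lam k (g (xs k) - g x)| ≤ ‖lam k‖ * ‖g (xs k) - g x‖ := by
          rw [← Real.norm_eq_abs]; exact (lam k).le_opNorm _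
        have h4 := abs_le.1 h3
        rw [h1, hgsplit]
        linarith
      have b5 : -(t * lam k (g x)) ≤
          C₀ * lam k (gminus (xs k)) + ‖lam k‖ * (‖g (xs k) - g x‖ * C₀) := by
        have hBnn : (0:ℝ) ≤ lam k (gminus (xs k)) + ‖lam k‖ * ‖g (xs k) - g x‖ := by
          have := hgm k
          positivity
        have : -(t * lam k (g x)) = t * (-(lam k (g x))) := by ring
        rw [this]
        calc t * (-(lam k (g x)))
            ≤ t * (lam k (gminus (xs k)) + ‖lam k‖ * ‖g (xs k) - g x‖) :=
              mul_le_mul_of_nonneg_left b4 ht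
          _ ≤ C₀ * (lam k (gminus (xs k)) + ‖lam k‖ * ‖g (xs k) - g x‖) :=
              mul_le_mul_of_nonneg_right ht2 hBnn
          _ = C₀ * lam k (gminus (xs k)) + ‖lam k‖ * (‖g (xs k) - g x‖ * C₀) := by ring
      have b6 : 0 ≤ lam k w := hdual k w hw
      have h1v := abs_le.1 b1
      have h2v := abs_le.1 b2
      have h3v := abs_le.1 b3
      have hneg : -(lam k u) = -(lam k (g' x v)) - t * lam k (g x) - lam k w := by
        rw [hexp]; ring
      have target_eq : A k + ‖lam k‖ * E k =
          ‖R‖ * C₀ + ‖f' (xs k)‖ * C₀ + C₀ * lam k (gminus (xs k)) +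
            (‖lam k‖ * (‖g' (xs k) - g' x‖ * C₀) + ‖lam k‖ * (‖g (xs k) - g x‖ * C₀)) := by
        simp only [hA, hE]
        rw [← hR]
        ring
      rw [hneg, hRv, target_eq]
      linarith [h1v.1, h1v.2, h2v.1, h2v.2, h3v.1, h3v.2, b5, b6]
    -- conclude the operator-norm bound
    apply ContinuousLinearMap.opNorm_le_of_unit_norm hM
    intro u hu
    rw [Real.norm_eq_abs, abs_le]
    constructor
    · have := claim u (le_of_eq hu)
      linarith
    · have := claim (-u) (by rw [norm_neg, hu])
      rw [map_neg, neg_neg] at this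
      linarith
  -- limits
  have hRlim : Tendsto (fun k => ‖f' (xs k) + (lam k).comp (g' (xs k))‖) atTop (nhds 0) := by
    simpa using hres.norm
  have hf'lim : Tendsto (fun k => ‖f' (xs k)‖) atTop (nhds ‖f' x‖) :=
    ((hf'c.tendsto x).comp hxs).norm
  have hg'lim : Tendsto (fun k => ‖g' (xs k) - g' x‖) atTop (nhds 0) := by
    have : Tendsto (fun k => g' (xs k) - g' x) atTop (nhds (g' x - g' x)) :=
      ((hg'c.tendsto x).comp hxs).sub tendsto_const_nhds
    rw [sub_self] at this
    simpa using this.norm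
  have hglim : Tendsto (fun k => ‖g (xs k) - g x‖) atTop (nhds 0) := by
    have : Tendsto (fun k => g (xs k) - g x) atTop (nhds (g x - g x)) :=
      ((hgc.tendsto x).comp hxs).sub tendsto_const_nhds
    rw [sub_self] at this
    simpa using this.norm
  have hAlim : Tendsto A atTop (nhds (C₀ * (0 + ‖f' x‖ + 0))) := by
    exact (tendsto_const_nhds.mul ((hRlim.add hf'lim).add hcomp))
  have hElim : Tendsto E atTop (nhds 0) := by
    have : Tendsto E atTop (nhds (C₀ * (0 + 0))) :=
      tendsto_const_nhds.mul (hg'lim.add hglim)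
    simpa using this
  set Ainf : ℝ := C₀ * (0 + ‖f' x‖ + 0) + 1 with hAinf
  have hAev : ∀ᶠ k in atTop, A k < Ainf := hAlim.eventually_lt_const (by simp [hAinf])
  have hEev : ∀ᶠ k in atTop, E k < 1/2 := hElim.eventually_lt_const (by norm_num)
  have hbdd : ∀ᶠ k in atTop, ‖lam k‖ ≤ 2 * Ainf := by
    filter_upwards [hAev, hEev] with k hA1 hE1
    have h1 := hkey k
    have h2 : ‖lam k‖ * E k ≤ ‖lam k‖ * (1/2) :=
      mul_le_mul_of_nonneg_left hE1.le (norm_nonneg _)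
    linarith
  obtain ⟨N, hN⟩ := eventually_atTop.1 hbdd
  have hAinn : 0 ≤ Ainf := by
    have : 0 ≤ C₀ * (0 + ‖f' x‖ + 0) := by positivity
    linarith
  refine ⟨2 * Ainf + ∑ i ∈ Finset.range N, ‖lam i‖, fun k => ?_⟩
  have hsumnn : 0 ≤ ∑ i ∈ Finset.range N, ‖lam i‖ :=
    Finset.sum_nonneg fun i _ => norm_nonneg _
  rcases le_or_gt N k with hk | hk
  · have := hN k hk
    linarith
  · have h1 : ‖lam k‖ ≤ ∑ i ∈ Finset.range N, ‖lam i‖ :=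
      Finset.single_le_sum (fun i _ => norm_nonneg (lam i)) (Finset.mem_range.2 hk)
    linarith
end
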